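/- arXiv:2003.13132 — 4 statements merged into one kernel-verified Lean document; each statement's English description precedes it below -/
import Mathlib

section
/- Let m = m(n) be a sequence of positive integers with (ln n)/m(n) → 0 as n → ∞ (i.e. m ≫ ln n). Then for every fixed real z > 0, the quantity z·n^z·∫_0^∞ [1 − (1 − S_m(τ)e^{−τ})^n]·τ^{z−1} dτ is asymptotically equivalent to n^z·m^z as n → ∞; equivalently, z·∫_0^∞ [1 − (1 − S_{m}(mξ)e^{−mξ})^n]·ξ^{z−1} dξ → 1 as n → ∞. (This quantity equals the z-th moment E[Δ_{m,n}^z] of the maximum Δ_{m,n} of n independent Erlang(m, 1/n) random variables.) -/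
open MeasureTheory Filter Real

/-- `S m y = ∑_{l=0}^{m-1} y^l / l!`, the `m`-th partial sum of the Taylor series of `e^y`. -/
noncomputable def S (m : ℕ) (y : ℝ) : ℝ := ∑ l ∈ Finset.range m, y ^ l / (Nat.factorial l)

open Set

section Aux
lemma S_nonneg (m : ℕ) {x : ℝ} (hx : 0 ≤ x) : 0 ≤ S m x := by
  apply Finset.sum_nonneg
  intro l _
  positivity

lemma S_le_exp (m : ℕ) {x : ℝ} (hx : 0 ≤ x) : S m x ≤ Real.exp x :=
  Real.sum_le_exp_of_nonneg hx m

-- upper tail bound: for ξ ≥ 1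
lemma tilt_upper (m : ℕ) {ξ : ℝ} (hξ : 1 ≤ ξ) :
    S m ((m : ℝ) * ξ) * Real.exp (-((m : ℝ) * ξ)) ≤ Real.exp ((m : ℝ) * (1 - ξ + Real.log ξ)) := by
  have hξ0 : (0:ℝ) < ξ := lt_of_lt_of_le one_pos hξ
  have hS : S m ((m : ℝ) * ξ) ≤ ξ ^ m * Real.exp (m : ℝ) := by
    have h1 : S m ((m : ℝ) * ξ) ≤ ξ ^ m * ∑ l ∈ Finset.range m, (m : ℝ) ^ l / (Nat.factorial l) := by
      rw [Finset.mul_sum]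
      apply Finset.sum_le_sum
      intro l hl
      have hlm : l ≤ m := le_of_lt (Finset.mem_range.mp hl)
      have h2 : ((m : ℝ) * ξ) ^ l / (Nat.factorial l) = ((m:ℝ)^l / (Nat.factorial l)) * ξ^l := by
        rw [mul_pow]; ring
      rw [h2, mul_comm (ξ ^ m) _]
      apply mul_le_mul_of_nonneg_left _ (by positivity)
      exact pow_le_pow_right₀ (by exact hξ) hlm
    refine h1.trans ?_
    apply mul_le_mul_of_nonneg_left _ (by positivity)
    exact Real.sum_le_exp_of_nonneg (Nat.cast_nonneg m) m
  calc S m ((m : ℝ) * ξ) * Real.exp (-((m : ℝ) * ξ))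
      ≤ (ξ ^ m * Real.exp (m : ℝ)) * Real.exp (-((m : ℝ) * ξ)) := by
        apply mul_le_mul_of_nonneg_right hS (le_of_lt (Real.exp_pos _))
    _ = Real.exp ((m : ℝ) * (1 - ξ + Real.log ξ)) := by
        rw [← Real.exp_log (pow_pos hξ0 m), Real.log_pow, ← Real.exp_add, ← Real.exp_add]
        ring_nf

lemma tilt_lower (m : ℕ) {ξ : ℝ} (h0 : 0 < ξ) (h1 : ξ ≤ 1) :
    1 - S m ((m:ℝ)*ξ) * Real.exp (-((m:ℝ)*ξ)) ≤ Real.exp ((m:ℝ)*(1 - ξ + Real.log ξ)) := by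
  set x : ℝ := (m:ℝ)*ξ with hxdef
  have hx0 : 0 ≤ x := by positivity
  have hxt : x * ξ⁻¹ = (m:ℝ) := by
    field_simp [hxdef]
    rw [hxdef]; ring
  have key : Real.exp x ≤ S m x + ξ^m * Real.exp (m:ℝ) := by
    have hs : HasSum (fun l : ℕ => x^l / (Nat.factorial l)) (Real.exp x) := by
      rw [Real.exp_eq_exp_ℝ]
      exact NormedSpace.expSeries_div_hasSum_exp x
    refine le_of_tendsto hs.tendsto_sum_nat (Filter.Eventually.of_forall fun N => ?_)
    calc ∑ l ∈ Finset.range N, x^l / (Nat.factorial l)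
        ≤ ∑ l ∈ Finset.range (max N m), x^l / (Nat.factorial l) := by
          apply Finset.sum_le_sum_of_subset_of_nonneg
          · exact Finset.range_subset_range.mpr (le_max_left N m)
          · intro l _ _; positivity
      _ = S m x + ∑ l ∈ Finset.Ico m (max N m), x^l / (Nat.factorial l) := by
          rw [S, Finset.range_eq_Ico, Finset.range_eq_Ico]
          exact (Finset.sum_Ico_consecutive _ (Nat.zero_le m) (le_max_right N m)).symm
      _ ≤ S m x + ξ^m * Real.exp (m:ℝ) := by
          gcongr
          calc ∑ l ∈ Finset.Ico m (max N m), x^l / (Nat.factorial l)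
              ≤ ∑ l ∈ Finset.Ico m (max N m), ξ^m * ((m:ℝ)^l / (Nat.factorial l)) := by
                apply Finset.sum_le_sum
                intro l hl
                have hml : m ≤ l := (Finset.mem_Ico.mp hl).1
                have hx : x ^ l = (m:ℝ)^l * ξ^l := by
                  rw [hxdef, mul_pow]
                have hξl : ξ^l ≤ ξ^m := pow_le_pow_of_le_one h0.le h1 hml
                have hnn : (0:ℝ) ≤ (m:ℝ)^l / (Nat.factorial l) := by positivity
                calc x^l / (Nat.factorial l) = ξ^l * ((m:ℝ)^l / (Nat.factorial l)) := by
                      rw [hx]; ring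
                  _ ≤ ξ^m * ((m:ℝ)^l / (Nat.factorial l)) :=
                      mul_le_mul_of_nonneg_right hξl hnn
                  _ = ξ^m * ((m:ℝ)^l / (Nat.factorial l)) := rfl
            _ = ξ^m * ∑ l ∈ Finset.Ico m (max N m), (m:ℝ)^l / (Nat.factorial l) := by
                rw [Finset.mul_sum]
            _ ≤ ξ^m * Real.exp (m:ℝ) := by
                apply mul_le_mul_of_nonneg_left _ (by positivity)
                calc ∑ l ∈ Finset.Ico m (max N m), (m:ℝ)^l / (Nat.factorial l)
                    ≤ ∑ l ∈ Finset.range (max N m), (m:ℝ)^l / (Nat.factorial l) := by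
                      apply Finset.sum_le_sum_of_subset_of_nonneg
                      · rw [Finset.range_eq_Ico]
                        exact Finset.Ico_subset_Ico (Nat.zero_le m) le_rfl
                      · intro l _ _; positivity
                  _ ≤ Real.exp (m:ℝ) := Real.sum_le_exp_of_nonneg (Nat.cast_nonneg m) _
  have h2 : (1:ℝ) ≤ (S m x + ξ^m * Real.exp (m:ℝ)) * Real.exp (-x) := by
    calc (1:ℝ) = Real.exp (x + -x) := by rw [add_neg_cancel, Real.exp_zero]
      _ = Real.exp x * Real.exp (-x) := Real.exp_add x (-x)
      _ ≤ _ := mul_le_mul_of_nonneg_right key (Real.exp_pos _).le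
  have h3 : ξ^m * Real.exp (m:ℝ) * Real.exp (-x) = Real.exp ((m:ℝ)*(1 - ξ + Real.log ξ)) := by
    rw [← Real.exp_log (pow_pos h0 m), Real.log_pow, ← Real.exp_add, ← Real.exp_add]
    rw [hxdef]; ring_nf
  nlinarith [h2, h3]

lemma phi_neg {x:ℝ} (hx : 0 < x) (h1 : x ≠ 1) : 1 - x + Real.log x < 0 := by
  have := Real.log_lt_sub_one_of_pos hx h1; linarith

lemma phi_mono {ξ a : ℝ} (h0 : 0 < ξ) (hle : ξ ≤ a) (ha : a ≤ 1) :
    1 - ξ + Real.log ξ ≤ 1 - a + Real.log a := by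
  have ha0 : 0 < a := lt_of_lt_of_le h0 hle
  have h := Real.log_le_sub_one_of_pos (div_pos h0 ha0)
  rw [Real.log_div h0.ne' ha0.ne'] at h
  have h2 : ξ / a ≤ ξ/a := le_rfl
  have h5 : (1:ℝ) ≤ a⁻¹ := (one_le_inv₀ ha0).2 ha
  have h3 : (a - ξ)/a ≥ a - ξ := by
    rw [ge_iff_le, div_eq_mul_inv]
    nlinarith [mul_le_mul_of_nonneg_right h5 (sub_nonneg.mpr hle)]
  have h4 : ξ / a - 1 = -((a - ξ)/a) := by field_simp; ring
  nlinarith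
lemma phi_tangent {A ξ : ℝ} (hA : 1 < A) (hξ : A ≤ ξ) :
    1 - ξ + Real.log ξ ≤ (1 - A + Real.log A) - (1 - 1/A)*(ξ - A) := by
  have hA0 : 0 < A := lt_trans one_pos hA
  have hξ0 : 0 < ξ := lt_of_lt_of_le hA0 hξ
  have h := Real.log_le_sub_one_of_pos (div_pos hξ0 hA0)
  rw [Real.log_div hξ0.ne' hA0.ne'] at h
  have h2 : ξ/A - 1 = (ξ - A)/A := by field_simp
  rw [h2] at h
  have h3 : (ξ - A)/A = (ξ - A) * (1/A) := by ring
  nlinarith [mul_pos hA0 hA0]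


lemma m_atTop (m : ℕ → ℕ) (hm : ∀ n, 0 < m n)
    (hgrow : Tendsto (fun n : ℕ => Real.log n / (m n : ℝ)) atTop (nhds 0)) :
    Tendsto (fun n : ℕ => (m n : ℝ)) atTop atTop := by
  apply tendsto_atTop_mono' _ _ (Real.tendsto_log_atTop.comp tendsto_natCast_atTop_atTop)
  have h1 : ∀ᶠ n : ℕ in atTop, Real.log n / (m n : ℝ) < 1 :=
    hgrow.eventually_lt_const one_pos
  filter_upwards [h1] with n hn
  have hmn : (0:ℝ) < (m n : ℝ) := by exact_mod_cast hm n
  exact le_of_lt ((div_lt_one hmn).mp hn)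

lemma n_exp_tendsto (m : ℕ → ℕ) (hm : ∀ n, 0 < m n)
    (hgrow : Tendsto (fun n : ℕ => Real.log n / (m n : ℝ)) atTop (nhds 0))
    {c : ℝ} (hc : c < 0) :
    Tendsto (fun n : ℕ => (n:ℝ) * Real.exp ((m n : ℝ) * c)) atTop (nhds 0) := by
  have h2 : Tendsto (fun n : ℕ => Real.log n / (m n : ℝ) + c) atTop (nhds c) := by
    simpa using hgrow.add_const c
  have h1 : Tendsto (fun n : ℕ => Real.log n + (m n : ℝ) * c) atTop atBot := by
    have h3 := (m_atTop m hm hgrow).atTop_mul_neg hc h2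
    apply h3.congr
    intro n
    have hmn : (m n : ℝ) ≠ 0 := by
      exact_mod_cast (hm n).ne'
    field_simp
  have h4 : Tendsto (fun n : ℕ => Real.exp (Real.log n + (m n : ℝ) * c)) atTop (nhds 0) :=
    Real.tendsto_exp_atBot.comp h1
  apply h4.congr'
  filter_upwards [eventually_ge_atTop 1] with n hn
  have hn0 : (0:ℝ) < (n:ℝ) := by exact_mod_cast hn
  rw [Real.exp_add, Real.exp_log hn0]

lemma est (z : ℝ) (hz : 0 < z) {δ : ℝ} (hδ0 : 0 < δ) (hδ1 : δ < 1)
    (M n : ℕ) (hn : 1 ≤ n)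
    (hMκ : 1 ≤ (M:ℝ) * (1 - 1/(1+δ))) :
    (1 - Real.exp ((M:ℝ) * (1 - (1-δ) + Real.log (1-δ)))) * (1-δ)^z
      ≤ z * ∫ ξ in Ioi (0:ℝ), (1 - (1 - S M ((M:ℝ)*ξ)*Real.exp (-((M:ℝ)*ξ)))^n) * ξ^(z-1)
  ∧ z * ∫ ξ in Ioi (0:ℝ), (1 - (1 - S M ((M:ℝ)*ξ)*Real.exp (-((M:ℝ)*ξ)))^n) * ξ^(z-1)
      ≤ (1+δ)^z + z * ((n:ℝ) * Real.exp ((M:ℝ)*(1 - (1+δ) + Real.log (1+δ)))) *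
          (Real.exp (1+δ) * ∫ ξ in Ioi (0:ℝ), Real.exp (-ξ) * ξ^(z-1)) := by
  set A : ℝ := 1 + δ with hA
  set a : ℝ := 1 - δ with ha
  have hA1 : 1 < A := by simp [hA]; linarith
  have hA0 : 0 < A := by linarith
  have ha0 : 0 < a := by simp [ha]; linarith
  have ha1 : a ≤ 1 := by simp [ha]; linarith
  set F : ℝ → ℝ := fun ξ => 1 - S M ((M:ℝ)*ξ)*Real.exp (-((M:ℝ)*ξ)) with hF
  set g : ℝ → ℝ := fun ξ => (1 - F ξ ^ n) * ξ^(z-1) with hg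
  set ψ : ℝ → ℝ := fun ξ => Real.exp (-ξ) * ξ^(z-1) with hψdef
  set c : ℝ := (n:ℝ) * Real.exp ((M:ℝ)*(1 - A + Real.log A)) * Real.exp A with hc
  have hc0 : 0 ≤ c := by positivity
  -- basic bounds on F
  have hF01 : ∀ ξ : ℝ, 0 < ξ → 0 ≤ F ξ ∧ F ξ ≤ 1 := by
    intro ξ hξ
    have hx0 : (0:ℝ) ≤ (M:ℝ)*ξ := by positivity
    constructor
    · have h1 : S M ((M:ℝ)*ξ) ≤ Real.exp ((M:ℝ)*ξ) := S_le_exp M hx0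
      have h2 : S M ((M:ℝ)*ξ) * Real.exp (-((M:ℝ)*ξ)) ≤ 1 := by
        calc S M ((M:ℝ)*ξ) * Real.exp (-((M:ℝ)*ξ))
            ≤ Real.exp ((M:ℝ)*ξ) * Real.exp (-((M:ℝ)*ξ)) :=
              mul_le_mul_of_nonneg_right h1 (Real.exp_pos _).le
          _ = 1 := by rw [← Real.exp_add, add_neg_cancel, Real.exp_zero]
      simp only [hF]; linarith
    · have := mul_nonneg (S_nonneg M hx0) (Real.exp_pos (-((M:ℝ)*ξ))).le
      simp only [hF]; linarith
  -- continuity on Ioi 0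
  have hFc : Continuous F := by
    rw [hF]
    apply Continuous.sub continuous_const
    apply Continuous.mul
    · unfold S
      apply continuous_finset_sum
      intro l _
      fun_prop
    · fun_prop
  have hg_cont : ContinuousOn g (Ioi 0) := by
    rw [hg]
    apply ContinuousOn.mul
    · exact (continuous_const.sub (hFc.pow n)).continuousOn
    · exact ContinuousOn.rpow_const continuousOn_id (fun x hx => Or.inl (ne_of_gt hx))
  -- pointwise bounds
  have hgnn : ∀ ξ ∈ Ioi (0:ℝ), 0 ≤ g ξ := by
    intro ξ hξ
    have h := hF01 ξ hξ
    have : F ξ ^ n ≤ 1 := pow_le_one₀ h.1 h.2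
    have hr : (0:ℝ) ≤ ξ^(z-1) := Real.rpow_nonneg (le_of_lt hξ) _
    simp only [hg]
    exact mul_nonneg (by linarith) hr
  have hg_le_pow : ∀ ξ ∈ Ioi (0:ℝ), g ξ ≤ ξ^(z-1) := by
    intro ξ hξ
    have h := hF01 ξ hξ
    have hFn : 0 ≤ F ξ ^ n := pow_nonneg h.1 n
    have hr : (0:ℝ) ≤ ξ^(z-1) := Real.rpow_nonneg (le_of_lt hξ) _
    simp only [hg]
    nlinarith
  have hg_tail : ∀ ξ ∈ Ioi A, g ξ ≤ c * ψ ξ := by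
    intro ξ hξ
    rw [mem_Ioi] at hξ
    have hξ0 : 0 < ξ := lt_trans hA0 hξ
    have hξ1 : 1 ≤ ξ := le_of_lt (lt_trans hA1 hξ)
    have h := hF01 ξ hξ0
    -- 1 - F^n ≤ n (1 - F)
    have hber : 1 - F ξ ^ n ≤ (n:ℝ) * (1 - F ξ) := by
      have h2 : (-2:ℝ) ≤ F ξ - 1 := by linarith
      have := one_add_mul_le_pow h2 n
      have h3 : (1 + (F ξ - 1)) ^ n = F ξ ^ n := by ring_nf
      rw [h3] at this
      nlinarith
    have h1F : 1 - F ξ = S M ((M:ℝ)*ξ)*Real.exp (-((M:ℝ)*ξ)) := by simp [hF]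
    have htu : 1 - F ξ ≤ Real.exp ((M:ℝ)*(1 - ξ + Real.log ξ)) := by
      rw [h1F]; exact tilt_upper M hξ1
    have hphi : (M:ℝ)*(1 - ξ + Real.log ξ) ≤ (M:ℝ)*(1 - A + Real.log A) - (ξ - A) := by
      have h4 := phi_tangent hA1 (le_of_lt hξ)
      have h5 : (M:ℝ)*(1 - ξ + Real.log ξ) ≤
          (M:ℝ)*((1 - A + Real.log A) - (1 - 1/A)*(ξ - A)) :=
        mul_le_mul_of_nonneg_left h4 (Nat.cast_nonneg M)
      have h6 : (ξ - A) ≤ (M:ℝ)*(1 - 1/A)*(ξ - A) := by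
        have h7 : 0 ≤ ξ - A := by linarith
        nlinarith
      nlinarith
    have ht2 : 1 - F ξ ^ n ≤ (n:ℝ) * Real.exp ((M:ℝ)*(1 - A + Real.log A) - (ξ - A)) := by
      calc 1 - F ξ ^ n ≤ (n:ℝ) * (1 - F ξ) := hber
        _ ≤ (n:ℝ) * Real.exp ((M:ℝ)*(1 - ξ + Real.log ξ)) :=
            mul_le_mul_of_nonneg_left htu (Nat.cast_nonneg n)
        _ ≤ (n:ℝ) * Real.exp ((M:ℝ)*(1 - A + Real.log A) - (ξ - A)) := by
            apply mul_le_mul_of_nonneg_left _ (Nat.cast_nonneg n)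
            exact Real.exp_le_exp.mpr hphi
    have hr : (0:ℝ) ≤ ξ^(z-1) := Real.rpow_nonneg hξ0.le _
    have heq : c * ψ ξ = ((n:ℝ) * Real.exp ((M:ℝ)*(1 - A + Real.log A) - (ξ - A))) * ξ^(z-1) := by
      have e3 : Real.exp ((M:ℝ)*(1 - A + Real.log A) - (ξ - A))
          = Real.exp ((M:ℝ)*(1 - A + Real.log A)) * Real.exp A * Real.exp (-ξ) := by
        rw [← Real.exp_add, ← Real.exp_add]
        congr 1
        ring
      simp only [hc, hψdef, e3]
      ring
    rw [heq]
    simp only [hg]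
    exact mul_le_mul_of_nonneg_right ht2 hr
  -- lower pointwise bound on (0, a]
  have hg_low : ∀ ξ ∈ Ioc (0:ℝ) a,
      (1 - Real.exp ((M:ℝ)*(1 - a + Real.log a))) * ξ^(z-1) ≤ g ξ := by
    intro ξ hξ
    obtain ⟨hξ0, hξa⟩ := hξ
    have h := hF01 ξ hξ0
    have hFn : F ξ ^ n ≤ F ξ := pow_le_of_le_one h.1 h.2 (by omega)
    have htl : F ξ ≤ Real.exp ((M:ℝ)*(1 - ξ + Real.log ξ)) := tilt_lower M hξ0 (le_trans hξa ha1)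
    have hmono : (M:ℝ)*(1 - ξ + Real.log ξ) ≤ (M:ℝ)*(1 - a + Real.log a) :=
      mul_le_mul_of_nonneg_left (phi_mono hξ0 hξa ha1) (Nat.cast_nonneg M)
    have hFa : F ξ ^ n ≤ Real.exp ((M:ℝ)*(1 - a + Real.log a)) :=
      hFn.trans (htl.trans (Real.exp_le_exp.mpr hmono))
    have hr : (0:ℝ) ≤ ξ^(z-1) := Real.rpow_nonneg hξ0.le _
    simp only [hg]
    apply mul_le_mul_of_nonneg_right _ hr
    linarith
  -- integrability
  have hsub1 : Ioc (0:ℝ) A ⊆ Ioi 0 := fun x hx => hx.1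
  have hsuba : Ioc (0:ℝ) a ⊆ Ioi 0 := fun x hx => hx.1
  have hψint : IntegrableOn ψ (Ioi 0) := Real.GammaIntegral_convergent hz
  have hrpow_int : ∀ b : ℝ, 0 < b → IntegrableOn (fun ξ : ℝ => ξ^(z-1)) (Ioc 0 b) := by
    intro b hb
    rw [← intervalIntegrable_iff_integrableOn_Ioc_of_le hb.le]
    exact intervalIntegral.intervalIntegrable_rpow' (by linarith)
  have hval : ∀ b : ℝ, 0 < b → ∫ ξ in Ioc (0:ℝ) b, ξ^(z-1) = b^z/z := by
    intro b hb
    rw [← intervalIntegral.integral_of_le hb.le,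
      integral_rpow (Or.inl (by linarith : (-1:ℝ) < z - 1)),
      Real.zero_rpow (by linarith : z - 1 + 1 ≠ 0)]
    ring_nf
  have hg_int1 : IntegrableOn g (Ioc 0 A) := by
    apply Integrable.mono' (hrpow_int A hA0)
      ((hg_cont.mono hsub1).aestronglyMeasurable measurableSet_Ioc)
    filter_upwards [ae_restrict_mem measurableSet_Ioc] with ξ hξ
    rw [Real.norm_eq_abs, abs_of_nonneg (hgnn ξ (Set.mem_Ioi.mpr hξ.1))]
    exact hg_le_pow ξ (Set.mem_Ioi.mpr hξ.1)
  have hg_int2 : IntegrableOn g (Ioi A) := by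
    apply Integrable.mono' ((hψint.mono_set (Ioi_subset_Ioi hA0.le)).const_mul c)
      ((hg_cont.mono (Ioi_subset_Ioi hA0.le)).aestronglyMeasurable measurableSet_Ioi)
    filter_upwards [ae_restrict_mem measurableSet_Ioi] with ξ hξ
    rw [Real.norm_eq_abs, abs_of_nonneg (hgnn ξ (Set.mem_Ioi.mpr (lt_trans hA0 hξ)))]
    exact hg_tail ξ hξ
  have hg_int : IntegrableOn g (Ioi 0) := by
    rw [← Ioc_union_Ioi_eq_Ioi hA0.le, integrableOn_union]
    exact ⟨hg_int1, hg_int2⟩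
  have hgnn_ae : 0 ≤ᵐ[volume.restrict (Ioi (0:ℝ))] g := by
    filter_upwards [ae_restrict_mem measurableSet_Ioi] with ξ hξ
    exact hgnn ξ hξ
  have hsplit : ∫ ξ in Ioi (0:ℝ), g ξ = (∫ ξ in Ioc 0 A, g ξ) + ∫ ξ in Ioi A, g ξ := by
    rw [← Ioc_union_Ioi_eq_Ioi hA0.le]
    exact MeasureTheory.setIntegral_union (Set.Ioc_disjoint_Ioi le_rfl) measurableSet_Ioi
      hg_int1 hg_int2
  constructor
  · -- lower bound
    have l1 : ∫ ξ in Ioc (0:ℝ) a, (1 - Real.exp ((M:ℝ)*(1 - a + Real.log a))) * ξ^(z-1)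
        ≤ ∫ ξ in Ioc (0:ℝ) a, g ξ := by
      apply setIntegral_mono_on ((hrpow_int a ha0).const_mul _)
        (hg_int.mono_set hsuba) measurableSet_Ioc hg_low
    have l1' : ∫ ξ in Ioc (0:ℝ) a, (1 - Real.exp ((M:ℝ)*(1 - a + Real.log a))) * ξ^(z-1)
        = (1 - Real.exp ((M:ℝ)*(1 - a + Real.log a))) * (a^z/z) := by
      rw [MeasureTheory.integral_const_mul, hval a ha0]
    have l2 : ∫ ξ in Ioc (0:ℝ) a, g ξ ≤ ∫ ξ in Ioi (0:ℝ), g ξ :=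
      setIntegral_mono_set hg_int hgnn_ae (HasSubset.Subset.eventuallyLE hsuba)
    have l3 : (1 - Real.exp ((M:ℝ)*(1 - a + Real.log a))) * (a^z/z)
        ≤ ∫ ξ in Ioi (0:ℝ), g ξ := by
      rw [← l1']; exact le_trans l1 l2
    have l4 := mul_le_mul_of_nonneg_left l3 hz.le
    calc (1 - Real.exp ((M:ℝ) * (1 - a + Real.log a))) * a^z
        = z * ((1 - Real.exp ((M:ℝ)*(1 - a + Real.log a))) * (a^z/z)) := by
          field_simp
      _ ≤ z * ∫ ξ in Ioi (0:ℝ), g ξ := l4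
  · -- upper bound
    have u1 : ∫ ξ in Ioc (0:ℝ) A, g ξ ≤ ∫ ξ in Ioc (0:ℝ) A, ξ^(z-1) := by
      apply setIntegral_mono_on hg_int1 (hrpow_int A hA0) measurableSet_Ioc
      intro ξ hξ
      exact hg_le_pow ξ (Set.mem_Ioi.mpr hξ.1)
    have u2 : ∫ ξ in Ioi A, g ξ ≤ c * ∫ ξ in Ioi A, ψ ξ := by
      rw [← MeasureTheory.integral_const_mul]
      apply setIntegral_mono_on hg_int2
        ((hψint.mono_set (Ioi_subset_Ioi hA0.le)).const_mul c) measurableSet_Ioi hg_tail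
    have hψnn : 0 ≤ᵐ[volume.restrict (Ioi (0:ℝ))] ψ := by
      filter_upwards [ae_restrict_mem measurableSet_Ioi] with ξ hξ
      have : (0:ℝ) < ξ := hξ
      simp only [hψdef]
      positivity
    have u3 : ∫ ξ in Ioi A, ψ ξ ≤ ∫ ξ in Ioi (0:ℝ), ψ ξ :=
      setIntegral_mono_set hψint hψnn
        (HasSubset.Subset.eventuallyLE (Ioi_subset_Ioi hA0.le))
    have u2' := le_trans u2 (mul_le_mul_of_nonneg_left u3 hc0)
    have u4 : ∫ ξ in Ioi (0:ℝ), g ξ ≤ A^z/z + c * ∫ ξ in Ioi (0:ℝ), ψ ξ := by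
      rw [hsplit]
      have h9 : ∫ ξ in Ioc (0:ℝ) A, g ξ ≤ A^z/z := by
        rw [← hval A hA0]; exact u1
      linarith
    have u5 := mul_le_mul_of_nonneg_left u4 hz.le
    refine le_trans u5 (le_of_eq ?_)
    rw [hc]
    field_simp

end Aux

/-- Supercritical case `m ≫ ln n`: for every fixed `z > 0`,
`z ∫_0^∞ [1 − (1 − S_m(mξ)e^{−mξ})^n] ξ^{z−1} dξ → 1`, i.e. the `z`-th moment
`z n^z ∫_0^∞ [1 − (1 − S_m(τ)e^{−τ})^n] τ^{z−1} dτ` of the maximum of `n` independent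
Erlang(m, 1/n) random variables is asymptotically `n^z m^z`. -/
theorem stmt0 (m : ℕ → ℕ) (hm : ∀ n, 0 < m n)
    (hgrow : Tendsto (fun n : ℕ => Real.log n / (m n : ℝ)) atTop (nhds 0))
    (z : ℝ) (hz : 0 < z) :
    Tendsto (fun n : ℕ =>
        z * ∫ ξ in Set.Ioi (0 : ℝ),
          (1 - (1 - S (m n) ((m n : ℝ) * ξ) * Real.exp (-((m n : ℝ) * ξ))) ^ n)
            * ξ ^ (z - 1))
      atTop (nhds 1) := by
  rw [Metric.tendsto_atTop]
  intro ε hε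
  rw [← eventually_atTop]
  -- choose δ
  have hcont : ContinuousAt (fun x : ℝ => x ^ z) 1 :=
    Real.continuousAt_rpow_const 1 z (Or.inl one_ne_zero)
  obtain ⟨δ₀, hδ₀, hδ₀p⟩ := Metric.continuousAt_iff.mp hcont (ε/3) (by positivity)
  set δ : ℝ := min (δ₀/2) (1/2) with hδdef
  have hδ0 : 0 < δ := lt_min (by positivity) (by norm_num)
  have hδ1 : δ < 1 := lt_of_le_of_lt (min_le_right _ _) (by norm_num)
  have hδlt : δ < δ₀ := lt_of_le_of_lt (min_le_left _ _) (by linarith)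
  have hApow : (1+δ)^z < 1 + ε/3 := by
    have := hδ₀p (show dist (1+δ) 1 < δ₀ by
      rw [Real.dist_eq]; rw [abs_of_nonneg (by linarith)]; simpa using hδlt)
    rw [Real.dist_eq, Real.one_rpow] at this
    have := abs_lt.mp this
    linarith [this.2]
  have hapow : 1 - ε/3 < (1-δ)^z := by
    have := hδ₀p (show dist (1-δ) 1 < δ₀ by
      rw [Real.dist_eq]; rw [abs_of_nonpos (by linarith)]; simpa using hδlt)
    rw [Real.dist_eq, Real.one_rpow] at this
    have := abs_lt.mp this
    linarith [this.1]
  have ha0 : (0:ℝ) < 1 - δ := by linarith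
  have hA1 : (1:ℝ) < 1 + δ := by linarith
  have hφa : 1 - (1-δ) + Real.log (1-δ) < 0 := by
    have := phi_neg ha0 (by linarith : (1:ℝ)-δ ≠ 1)
    linarith
  have hφA : 1 - (1+δ) + Real.log (1+δ) < 0 := by
    have := phi_neg (by linarith : (0:ℝ) < 1+δ) (by linarith : (1:ℝ)+δ ≠ 1)
    linarith
  set Cψ : ℝ := Real.exp (1+δ) * ∫ ξ in Ioi (0:ℝ), Real.exp (-ξ) * ξ^(z-1) with hCψ
  have hCψ0 : 0 ≤ Cψ := by
    apply mul_nonneg (Real.exp_pos _).le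
    apply MeasureTheory.setIntegral_nonneg measurableSet_Ioi
    intro ξ hξ
    have : (0:ℝ) < ξ := hξ
    positivity
  have hmtop := m_atTop m hm hgrow
  -- eventual conditions
  have E1 : ∀ᶠ n : ℕ in atTop, 1 ≤ (m n : ℝ) * (1 - 1/(1+δ)) := by
    have hκ : (0:ℝ) < 1 - 1/(1+δ) := by
      have : 1/(1+δ) < 1 := by rw [div_lt_one (by linarith)]; linarith
      linarith
    exact (hmtop.atTop_mul_const hκ).eventually_ge_atTop 1
  have E2 : ∀ᶠ n : ℕ in atTop, 1 ≤ n := eventually_ge_atTop 1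
  have E3 : ∀ᶠ n : ℕ in atTop, Real.exp ((m n : ℝ) * (1 - (1-δ) + Real.log (1-δ))) < ε/3 := by
    have h1 : Tendsto (fun n : ℕ => (m n : ℝ) * (1 - (1-δ) + Real.log (1-δ))) atTop atBot :=
      hmtop.atTop_mul_const_of_neg hφa
    have h2 := Real.tendsto_exp_atBot.comp h1
    exact h2.eventually_lt_const (by positivity)
  have E4 : ∀ᶠ n : ℕ in atTop,
      z * ((n:ℝ) * Real.exp ((m n : ℝ) * (1 - (1+δ) + Real.log (1+δ)))) * Cψ < ε/3 := by
    have h1 := n_exp_tendsto m hm hgrow hφA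
    have h2 : Tendsto (fun n : ℕ =>
        z * ((n:ℝ) * Real.exp ((m n : ℝ) * (1 - (1+δ) + Real.log (1+δ)))) * Cψ)
        atTop (nhds (z * 0 * Cψ)) := (h1.const_mul z).mul_const Cψ
    rw [mul_zero, zero_mul] at h2
    exact h2.eventually_lt_const (by positivity)
  filter_upwards [E1, E2, E3, E4] with n h1 h2 h3 h4
  obtain ⟨lo, hi⟩ := est z hz hδ0 hδ1 (m n) n h2 h1
  set I : ℝ := z * ∫ ξ in Ioi (0:ℝ),
      (1 - (1 - S (m n) ((m n : ℝ)*ξ)*Real.exp (-((m n : ℝ)*ξ)))^n) * ξ^(z-1) with hI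
  have hup : I < 1 + 2*(ε/3) := by
    calc I ≤ (1+δ)^z + z * ((n:ℝ) * Real.exp ((m n : ℝ)*(1 - (1+δ) + Real.log (1+δ)))) * Cψ := hi
      _ < (1 + ε/3) + ε/3 := by exact add_lt_add hApow h4
      _ = 1 + 2*(ε/3) := by ring
  have hdn : I > 1 - 2*(ε/3) := by
    have hexp0 : 0 ≤ Real.exp ((m n : ℝ) * (1 - (1-δ) + Real.log (1-δ))) := (Real.exp_pos _).le
    have hale : (1-δ)^z ≤ 1 := Real.rpow_le_one ha0.le (by linarith) hz.le
    have hagt : (0:ℝ) ≤ (1-δ)^z := Real.rpow_nonneg ha0.le z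
    have key : (1 - Real.exp ((m n : ℝ) * (1 - (1-δ) + Real.log (1-δ)))) * (1-δ)^z
        ≥ (1-δ)^z - ε/3 := by nlinarith
    calc I ≥ (1 - Real.exp ((m n : ℝ) * (1 - (1-δ) + Real.log (1-δ)))) * (1-δ)^z := lo
      _ ≥ (1-δ)^z - ε/3 := key
      _ > (1 - ε/3) - ε/3 := by linarith
      _ = 1 - 2*(ε/3) := by ring
  rw [Real.dist_eq, abs_lt]
  constructor <;> [linarith; linarith]
end

section
/- Let m = m(n) be a sequence of positive integers with (ln n)³/m(n) → 0 as n → ∞, let y be a fixed real number, and set λ(n) := m + √m·√(2 ln n − ln ln n) + (√m/√(2 ln n))·y. Then n·S_m(λ(n))·e^{−λ(n)} → e^{−y}/(2√π) as n → ∞, i.e. S_m(λ)e^{−λ} ∼ (1/n)·e^{−y}/(2√π). -/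
open MeasureTheory Filter Real

set_option maxHeartbeats 4000000

private lemma sandwich_aux (M K : ℕ) (hK1 : 1 ≤ K) (hKM : K ≤ M) (lam : ℝ)
    (hlam : (M : ℝ) ≤ lam) :
    (lam ^ (M - 1) / (Nat.factorial (M - 1) : ℝ)) *
        ((1 - (((M : ℝ) - K) / lam) ^ K) / (1 - ((M : ℝ) - K) / lam))
      ≤ (∑ l ∈ Finset.range M, lam ^ l / (Nat.factorial l : ℝ)) ∧
    (∑ l ∈ Finset.range M, lam ^ l / (Nat.factorial l : ℝ))
      ≤ (lam ^ (M - 1) / (Nat.factorial (M - 1) : ℝ)) * (1 / (1 - ((M : ℝ) - 1) / lam)) := by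
  have hM1 : 1 ≤ M := le_trans hK1 hKM
  have hMR : (1 : ℝ) ≤ (M : ℝ) := by exact_mod_cast hM1
  have hlam0 : (0 : ℝ) < lam := lt_of_lt_of_le (by linarith) hlam
  have hKR : (K : ℝ) ≤ (M : ℝ) := by exact_mod_cast hKM
  have hK1R : (1 : ℝ) ≤ (K : ℝ) := by exact_mod_cast hK1
  set t : ℝ := lam ^ (M - 1) / (Nat.factorial (M - 1) : ℝ) with ht_def
  have ht : 0 < t := by positivity
  set P : ℝ := ((M : ℝ) - 1) / lam with hP_def
  set P' : ℝ := ((M : ℝ) - K) / lam with hP'_def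
  have hP'0 : 0 ≤ P' := div_nonneg (by linarith) hlam0.le
  have hP0 : 0 ≤ P := div_nonneg (by linarith) hlam0.le
  have hP1 : P < 1 := by rw [hP_def, div_lt_one hlam0]; linarith
  have hP'1 : P' < 1 := by rw [hP'_def, div_lt_one hlam0]; linarith
  have key : ∀ k, k < M → (lam ^ (M-1-k) / (Nat.factorial (M-1-k) : ℝ)) ≤ t * P ^ k
      ∧ (k < K → t * P' ^ k ≤ lam ^ (M-1-k) / (Nat.factorial (M-1-k) : ℝ)) := by
    intro k
    induction k with
    | zero => intro _; exact ⟨by simp [ht_def], fun _ => by simp [ht_def]⟩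
    | succ k ih =>
      intro hkM
      obtain ⟨ihu, ihl⟩ := ih (Nat.lt_of_succ_lt hkM)
      have hprev0 : 0 ≤ lam ^ (M-1-k) / (Nat.factorial (M-1-k) : ℝ) := by positivity
      have hstep : lam ^ (M-1-(k+1)) / (Nat.factorial (M-1-(k+1)) : ℝ)
          = (lam ^ (M-1-k) / (Nat.factorial (M-1-k) : ℝ)) * (((M - 1 - k : ℕ) : ℝ) / lam) := by
        have hj : M - 1 - k = (M - 1 - (k + 1)) + 1 := by omega
        rw [hj, Nat.factorial_succ, pow_succ]
        have hfac : ((Nat.factorial (M - 1 - (k+1)) : ℕ) : ℝ) ≠ 0 := by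
          exact_mod_cast (Nat.factorial_pos _).ne'
        push_cast
        field_simp
      have hcast : ((M - 1 - k : ℕ) : ℝ) ≤ (M : ℝ) - 1 := by
        calc ((M - 1 - k : ℕ) : ℝ) ≤ ((M - 1 : ℕ) : ℝ) := by exact_mod_cast Nat.sub_le _ _
        _ = (M : ℝ) - 1 := by push_cast [hM1]; ring
      have hnn : 0 ≤ ((M - 1 - k : ℕ) : ℝ) / lam := by positivity
      have hub : ((M - 1 - k : ℕ) : ℝ) / lam ≤ P := by
        rw [hP_def]; gcongr
      constructor
      · rw [hstep, pow_succ, ← mul_assoc]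
        exact mul_le_mul ihu hub hnn (by positivity)
      · intro hkK
        have hlb : P' ≤ ((M - 1 - k : ℕ) : ℝ) / lam := by
          rw [hP'_def]
          gcongr
          calc (M : ℝ) - K = ((M - K : ℕ) : ℝ) := by push_cast [hKM]; ring
          _ ≤ ((M - 1 - k : ℕ) : ℝ) := by exact_mod_cast (by omega : M - K ≤ M - 1 - k)
        rw [hstep, pow_succ, ← mul_assoc]
        exact mul_le_mul (ihl (Nat.lt_of_succ_lt hkK)) hlb hP'0 hprev0
  have hsum : (∑ l ∈ Finset.range M, lam ^ l / (Nat.factorial l : ℝ))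
      = ∑ k ∈ Finset.range M, lam ^ (M-1-k) / (Nat.factorial (M-1-k) : ℝ) :=
    (Finset.sum_range_reflect (fun l => lam ^ l / (Nat.factorial l : ℝ)) M).symm
  have h1P : (0:ℝ) < 1 - P := by linarith
  have h1P' : (0:ℝ) < 1 - P' := by linarith
  constructor
  · -- lower bound
    rw [hsum]
    calc t * ((1 - P' ^ K) / (1 - P'))
        = t * (∑ k ∈ Finset.range K, P' ^ k) := by
          rw [geom_sum_eq hP'1.ne]
          congr 1
          rw [div_eq_div_iff h1P'.ne' (sub_ne_zero.mpr hP'1.ne)]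
          ring
      _ = ∑ k ∈ Finset.range K, t * P' ^ k := by rw [Finset.mul_sum]
      _ ≤ ∑ k ∈ Finset.range K, lam ^ (M-1-k) / (Nat.factorial (M-1-k) : ℝ) := by
          apply Finset.sum_le_sum
          intro k hk
          exact ((key k (lt_of_lt_of_le (Finset.mem_range.mp hk) hKM)).2 (Finset.mem_range.mp hk))
      _ ≤ ∑ k ∈ Finset.range M, lam ^ (M-1-k) / (Nat.factorial (M-1-k) : ℝ) := by
          apply Finset.sum_le_sum_of_subset_of_nonneg
          · exact Finset.range_subset_range.mpr hKM
          · intro i _ _; positivity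
  · -- upper bound
    rw [hsum]
    calc ∑ k ∈ Finset.range M, lam ^ (M-1-k) / (Nat.factorial (M-1-k) : ℝ)
        ≤ ∑ k ∈ Finset.range M, t * P ^ k := by
          apply Finset.sum_le_sum
          intro k hk
          exact (key k (Finset.mem_range.mp hk)).1
      _ = t * (∑ k ∈ Finset.range M, P ^ k) := by rw [Finset.mul_sum]
      _ ≤ t * (1 / (1 - P)) := by
          gcongr
          rw [geom_sum_eq hP1.ne]
          have heq : (P ^ M - 1) / (P - 1) = (1 - P ^ M) / (1 - P) := by
            rw [div_eq_div_iff (sub_ne_zero.mpr hP1.ne) h1P.ne']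
            ring
          rw [heq, div_le_div_iff₀ h1P h1P]
          have hPM : 0 ≤ P ^ M := by positivity
          nlinarith
  
private lemma stirfun_tendsto :
    Tendsto (fun M : ℕ => Real.log (Nat.factorial M)
      - ((M:ℝ) * Real.log M - (M:ℝ) + Real.log (2*π*(M:ℝ))/2)) atTop (nhds 0) := by
  have hπ : (0:ℝ) < π := pi_pos
  have h1 : Tendsto (fun M : ℕ => Real.log (Stirling.stirlingSeq M) - Real.log π / 2)
      atTop (nhds 0) := by
    have h0 := (Real.continuousAt_log (Real.sqrt_pos.mpr hπ).ne').tendsto.comp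
      Stirling.tendsto_stirlingSeq_sqrt_pi
    have h2 := h0.sub_const (Real.log π / 2)
    rw [Real.log_sqrt hπ.le] at h2
    simpa using h2
  apply h1.congr'
  filter_upwards [eventually_ge_atTop 1] with M hM
  have hM0 : (0:ℝ) < (M:ℝ) := by exact_mod_cast hM
  have hfac : (0:ℝ) < (Nat.factorial M : ℝ) := by exact_mod_cast M.factorial_pos
  have hs : Stirling.stirlingSeq M = (Nat.factorial M : ℝ) / (√(2*(M:ℝ)) * (((M:ℝ))/exp 1)^M) := rfl
  rw [hs, Real.log_div hfac.ne' (by positivity), Real.log_mul (by positivity) (by positivity),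
      Real.log_pow, Real.log_div hM0.ne' (Real.exp_ne_zero 1), Real.log_exp,
      Real.log_sqrt (by positivity), Real.log_mul (by norm_num) hM0.ne',
      Real.log_mul (by positivity : (2*π : ℝ) ≠ 0) hM0.ne',
      Real.log_mul (by norm_num : (2:ℝ) ≠ 0) hπ.ne']
  ring

private lemma sqrt_tendsto_atTop : Tendsto Real.sqrt atTop atTop := by
  apply tendsto_atTop_atTop.mpr
  intro b
  exact ⟨max 0 b ^ 2, fun c hc => by
    have h0 : (0:ℝ) ≤ max 0 b := le_max_left _ _
    have h := Real.sqrt_le_sqrt hc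
    rw [Real.sqrt_sq h0] at h
    exact (le_max_right 0 b).trans h⟩

private noncomputable def stirfun (M : ℕ) : ℝ :=
  Real.log (Nat.factorial M) - ((M:ℝ) * Real.log M - (M:ℝ) + Real.log (2*π*(M:ℝ))/2)

private lemma stirfun_tendsto' : Tendsto stirfun atTop (nhds 0) := stirfun_tendsto

/-- Supercritical case `m ≫ (ln n)³`: with
`λ(n) = m + √m √(2 ln n − ln ln n) + (√m/√(2 ln n)) y`, one has
`n S_m(λ) e^{−λ} → e^{−y}/(2√π)`, i.e. `S_m(λ) e^{−λ} ∼ (1/n) e^{−y}/(2√π)`. -/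
theorem stmt7 (m : ℕ → ℕ) (hm : ∀ n, 0 < m n)
    (hgrow : Tendsto (fun n : ℕ => (Real.log n) ^ 3 / (m n : ℝ)) atTop (nhds 0))
    (y : ℝ) :
    Tendsto (fun n : ℕ =>
        (n : ℝ) * S (m n)
            ((m n : ℝ) + Real.sqrt (m n) * Real.sqrt (2 * Real.log n - Real.log (Real.log n))
              + Real.sqrt (m n) / Real.sqrt (2 * Real.log n) * y)
          * Real.exp
            (-((m n : ℝ) + Real.sqrt (m n) * Real.sqrt (2 * Real.log n - Real.log (Real.log n))
              + Real.sqrt (m n) / Real.sqrt (2 * Real.log n) * y)))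
      atTop (nhds (Real.exp (-y) / (2 * Real.sqrt π))) := by
  have hπ : (0:ℝ) < π := pi_pos
  set L : ℕ → ℝ := fun n => Real.log n with hL_def
  set A : ℕ → ℝ := fun n => Real.sqrt (2 * L n - Real.log (L n)) with hA_def
  set X : ℕ → ℝ := fun n => A n + y / Real.sqrt (2 * L n) with hX_def
  set lam : ℕ → ℝ := fun n => (m n : ℝ) + Real.sqrt (m n) * X n with hlam_def
  set U : ℕ → ℝ := fun n => X n / Real.sqrt (m n) with hU_def
  set W : ℕ → ℝ := fun n => X n / Real.sqrt (2 * L n) with hW_def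
  set R : ℕ → ℝ := fun n => A n / Real.sqrt (2 * L n) with hR_def
  set KK : ℕ → ℕ := fun n => ⌈Real.sqrt (m n) / Real.sqrt (X n)⌉₊ with hKK_def
  set rho : ℕ → ℝ := fun n => ((m n : ℝ) - 1) / lam n with hrho_def
  set rho' : ℕ → ℝ := fun n => ((m n : ℝ) - (KK n : ℝ)) / lam n with hrho'_def
  set tt : ℕ → ℝ := fun n => lam n ^ (m n - 1) / ((Nat.factorial (m n - 1)) : ℝ) with htt_def
  set P : ℕ → ℝ := fun n => (n:ℝ) * tt n * Real.exp (-(lam n)) / (1 - rho n) with hP_def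
  set E : ℕ → ℝ := fun n => S (m n) (lam n) * (1 - rho n) / tt n with hE_def
  -- basic limits
  have hL : Tendsto L atTop atTop := Real.tendsto_log_atTop.comp tendsto_natCast_atTop_atTop
  have hlogL : Tendsto (fun n => Real.log (L n)) atTop atTop := Real.tendsto_log_atTop.comp hL
  have hgrow' : Tendsto (fun n : ℕ => L n ^ 3 / (m n : ℝ)) atTop (nhds 0) := hgrow
  have hLm3ev : ∀ᶠ n in atTop, L n ^ 3 ≤ (m n : ℝ) := by
    filter_upwards [hgrow'.eventually_lt_const one_pos, hL.eventually_ge_atTop 1] with n h1 h2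
    have hmp : (0:ℝ) < (m n : ℝ) := by exact_mod_cast hm n
    nlinarith [(div_lt_one hmp).mp h1]
  have hmR : Tendsto (fun n => (m n : ℝ)) atTop atTop :=
    tendsto_atTop_mono' _ hLm3ev ((tendsto_pow_atTop three_ne_zero).comp hL)
  have hmN : Tendsto m atTop atTop := tendsto_natCast_atTop_iff.mp hmR
  have hsm : Tendsto (fun n => Real.sqrt (m n)) atTop atTop := sqrt_tendsto_atTop.comp hmR
  have h2L : Tendsto (fun n => 2 * L n) atTop atTop := hL.const_mul_atTop two_pos
  have hs2L : Tendsto (fun n => Real.sqrt (2 * L n)) atTop atTop := sqrt_tendsto_atTop.comp h2L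
  have hLoM : Tendsto (fun n => L n / (m n : ℝ)) atTop (nhds 0) := by
    have h := hgrow'.mul ((hL.inv_tendsto_atTop).pow 2)
    rw [show (0:ℝ) * 0 ^ 2 = 0 by norm_num] at h
    apply h.congr'
    filter_upwards [hL.eventually_ge_atTop 1] with n hn
    show L n ^ 3 / (m n : ℝ) * L⁻¹ n ^ 2 = L n / (m n : ℝ)
    simp only [Pi.inv_apply]
    have h0 : (0:ℝ) < L n := by positivity
    have e : L n ^ 3 * (L n)⁻¹ ^ 2 = L n := by
      rw [inv_pow, ← div_eq_mul_inv, eq_comm, eq_div_iff (by positivity)]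
      ring
    calc L n ^ 3 / (m n : ℝ) * (L n)⁻¹ ^ 2 = L n ^ 3 * (L n)⁻¹ ^ 2 / (m n : ℝ) := by ring
      _ = L n / (m n : ℝ) := by rw [e]
  have hAtop : Tendsto A atTop atTop := by
    refine tendsto_atTop_mono' atTop ?_ (sqrt_tendsto_atTop.comp hL)
    filter_upwards [hL.eventually_ge_atTop 3] with n hn
    show Real.sqrt (L n) ≤ A n
    simp only [hA_def]
    apply Real.sqrt_le_sqrt
    have h1 : Real.log (L n) ≤ L n - 1 := Real.log_le_sub_one_of_pos (by linarith)
    linarith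
  have hB0 : Tendsto (fun n => y / Real.sqrt (2 * L n)) atTop (nhds 0) :=
    tendsto_const_nhds.div_atTop hs2L
  have hXtop : Tendsto X atTop atTop := by
    apply (hB0.add_atTop hAtop).congr
    intro n; simp only [hX_def]; ring
  have hlogLdiv : Tendsto (fun n => Real.log (L n) / L n) atTop (nhds 0) :=
    (Real.isLittleO_log_id_atTop.tendsto_div_nhds_zero).comp hL
  have hR1 : Tendsto R atTop (nhds 1) := by
    have hinner : Tendsto (fun n => 1 - Real.log (L n) / (2 * L n)) atTop (nhds 1) := by
      have hhalf : Tendsto (fun n => Real.log (L n) / (2 * L n)) atTop (nhds 0) := by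
        have h := hlogLdiv.div_const 2
        rw [zero_div] at h
        exact h.congr fun n => by rw [div_div, mul_comm]
      have h := (tendsto_const_nhds (x := (1:ℝ))).sub hhalf
      rw [sub_zero] at h
      exact h
    have h := (Real.continuous_sqrt.tendsto 1).comp hinner
    rw [Real.sqrt_one] at h
    apply h.congr'
    filter_upwards [hL.eventually_ge_atTop 3] with n hn
    have hlog : Real.log (L n) ≤ L n - 1 := Real.log_le_sub_one_of_pos (by linarith)
    have h2 : (0:ℝ) ≤ 2 * L n - Real.log (L n) := by linarith
    have hLn : L n ≠ 0 := by positivity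
    simp only [Function.comp, hR_def, hA_def]
    rw [← Real.sqrt_div h2]
    congr 1
    field_simp
  have hW1 : Tendsto W atTop (nhds 1) := by
    have hy2L : Tendsto (fun n => y / (2 * L n)) atTop (nhds 0) := tendsto_const_nhds.div_atTop h2L
    have h := hR1.add hy2L
    rw [add_zero] at h
    apply h.congr'
    filter_upwards [hL.eventually_ge_atTop 3] with n hn
    have h2 : (0:ℝ) ≤ 2 * L n := by linarith
    simp only [hR_def, hW_def, hX_def]
    rw [add_div, div_div, Real.mul_self_sqrt h2]
  have hU0 : Tendsto U atTop (nhds 0) := by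
    have h2LoM : Tendsto (fun n => 2 * L n / (m n : ℝ)) atTop (nhds 0) := by
      have := hLoM.const_mul 2
      rw [mul_zero] at this
      exact this.congr fun n => by ring
    have hsq : Tendsto (fun n => Real.sqrt (2 * L n / (m n : ℝ))) atTop (nhds 0) := by
      have h' := (Real.continuous_sqrt.tendsto 0).comp h2LoM
      rw [Real.sqrt_zero] at h'
      exact h'.congr fun n => rfl
    have h := hW1.mul hsq
    rw [mul_zero] at h
    apply h.congr'
    filter_upwards [hL.eventually_ge_atTop 3, hmR.eventually_ge_atTop 1] with n hn hmn
    have h2 : (0:ℝ) ≤ 2 * L n := by linarith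
    have hs2 : Real.sqrt (2 * L n) ≠ 0 := by positivity
    have hsmn : Real.sqrt (m n) ≠ 0 := by positivity
    simp only [hW_def, hU_def]
    rw [Real.sqrt_div h2]
    field_simp
  have hX3 : Tendsto (fun n => X n ^ 3 / Real.sqrt (m n)) atTop (nhds 0) := by
    have h8 : Tendsto (fun n => Real.sqrt (8 * (L n ^ 3 / (m n : ℝ)))) atTop (nhds 0) := by
      have h0 := hgrow'.const_mul 8
      rw [mul_zero] at h0
      have h' := (Real.continuous_sqrt.tendsto 0).comp h0
      rw [Real.sqrt_zero] at h'
      exact h'.congr fun n => rfl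
    have h := (hW1.pow 3).mul h8
    rw [one_pow, mul_zero] at h
    apply h.congr'
    filter_upwards [hL.eventually_ge_atTop 3, hmR.eventually_ge_atTop 1] with n hn hmn
    have h2 : (0:ℝ) ≤ 2 * L n := by linarith
    have hs2 : Real.sqrt (2 * L n) ≠ 0 := by positivity
    have hsmn : Real.sqrt (m n) ≠ 0 := by positivity
    have e1 : Real.sqrt (2 * L n) ^ 3 = Real.sqrt ((2 * L n) ^ 3) := by
      rw [show ((2:ℝ) * L n) ^ 3 = (2 * L n) ^ 2 * (2 * L n) by ring,
        Real.sqrt_mul (sq_nonneg _), Real.sqrt_sq h2, pow_succ, Real.sq_sqrt h2]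
    have e2 : (8:ℝ) * (L n ^ 3 / (m n : ℝ)) = (2 * L n) ^ 3 / (m n : ℝ) := by ring
    simp only [hW_def]
    rw [e2, Real.sqrt_div (by positivity), ← e1]
    field_simp
  have hsmx : Tendsto (fun n => Real.sqrt (m n) * X n) atTop atTop := hsm.atTop_mul_atTop₀ hXtop
  have hU0' : ∀ᶠ n in atTop, 0 ≤ U n := by
    filter_upwards [hXtop.eventually_ge_atTop 1] with n hn
    simp only [hU_def]; positivity
  have hmolam : Tendsto (fun n => (m n : ℝ) / lam n) atTop (nhds 1) := by
    have h1u : Tendsto (fun n => 1 + U n) atTop (nhds 1) := by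
      have h := (tendsto_const_nhds (x := (1:ℝ))).add hU0
      rw [add_zero] at h
      exact h
    have h := h1u.inv₀ one_ne_zero
    rw [inv_one] at h
    apply h.congr'
    filter_upwards [hXtop.eventually_ge_atTop 1, hmR.eventually_ge_atTop 1] with n hx hmn
    have hsmn : (0:ℝ) < Real.sqrt (m n) := by positivity
    have hU0n : 0 ≤ U n := by simp only [hU_def]; positivity
    have hlamU : lam n = (m n : ℝ) * (1 + U n) := by
      simp only [hlam_def, hU_def]
      field_simp
      nlinarith [Real.sq_sqrt (by positivity : (0:ℝ) ≤ (m n:ℝ)), hsmn]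
    rw [hlamU]
    have : (0:ℝ) < m n := by linarith
    field_simp
  have hstir0 : Tendsto (fun n => stirfun (m n)) atTop (nhds 0) := stirfun_tendsto'.comp hmN
  have hlinv : Tendsto (fun n => Real.log (1 + (Real.sqrt (m n) * X n)⁻¹)) atTop (nhds 0) := by
    have h1 : Tendsto (fun n => 1 + (Real.sqrt (m n) * X n)⁻¹) atTop (nhds 1) := by
      have h0 : Tendsto (fun n => (Real.sqrt (m n) * X n)⁻¹) atTop (nhds 0) :=
        hsmx.inv_tendsto_atTop.congr fun n => rfl
      have h := (tendsto_const_nhds (x := (1:ℝ))).add h0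
      rw [add_zero] at h
      exact h
    have h := (Real.continuousAt_log one_ne_zero).tendsto.comp h1
    rw [Real.log_one] at h
    exact h
  -- eventual bounds for K
  have hm4 : ∀ᶠ n in atTop, (4:ℝ) ≤ (m n : ℝ) := hmR.eventually_ge_atTop 4
  have hx1 : ∀ᶠ n in atTop, 1 ≤ X n := hXtop.eventually_ge_atTop 1
  have hKfacts : ∀ᶠ n in atTop, 1 ≤ KK n ∧ KK n ≤ m n ∧ (m n : ℝ) ≤ lam n := by
    filter_upwards [hm4, hx1] with n h4 h1x
    have hmp : (0:ℝ) < m n := by linarith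
    have hxp : (0:ℝ) < X n := by linarith
    have hsmp : (0:ℝ) < Real.sqrt (m n) := Real.sqrt_pos.mpr hmp
    have hsxp : (1:ℝ) ≤ Real.sqrt (X n) := by
      rw [show (1:ℝ) = Real.sqrt 1 by rw [Real.sqrt_one]]
      exact Real.sqrt_le_sqrt h1x
    refine ⟨Nat.one_le_ceil_iff.mpr (div_pos hsmp (by linarith)), ?_, ?_⟩
    · simp only [hKK_def]
      apply Nat.ceil_le.mpr
      calc Real.sqrt (m n) / Real.sqrt (X n) ≤ Real.sqrt (m n) := div_le_self hsmp.le hsxp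
        _ ≤ (m n : ℝ) := by
            have h := Real.sqrt_le_sqrt (show (m n:ℝ) ≤ (m n:ℝ)^2 by nlinarith)
            rwa [Real.sqrt_sq hmp.le] at h
    · simp only [hlam_def]
      nlinarith [mul_nonneg hsmp.le hxp.le]
  have hKr : Tendsto (fun n => (KK n : ℝ) / (Real.sqrt (m n) * X n)) atTop (nhds 0) := by
    have hsxx : Tendsto (fun n => Real.sqrt (X n) * X n) atTop atTop :=
      (sqrt_tendsto_atTop.comp hXtop).atTop_mul_atTop₀ hXtop
    have hbd : Tendsto (fun n => (Real.sqrt (X n) * X n)⁻¹ + (Real.sqrt (m n) * X n)⁻¹)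
        atTop (nhds 0) := by
      have h1 : Tendsto (fun n => (Real.sqrt (X n) * X n)⁻¹) atTop (nhds 0) :=
        hsxx.inv_tendsto_atTop.congr fun n => rfl
      have h2 : Tendsto (fun n => (Real.sqrt (m n) * X n)⁻¹) atTop (nhds 0) :=
        hsmx.inv_tendsto_atTop.congr fun n => rfl
      have h := h1.add h2
      rwa [add_zero] at h
    apply tendsto_of_tendsto_of_tendsto_of_le_of_le' tendsto_const_nhds hbd ?_ ?_
    · filter_upwards [hm4, hx1] with n h4 h1x
      have hxp : (0:ℝ) < X n := by linarith
      positivity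
    · filter_upwards [hm4, hx1] with n h4 h1x
      have hmp : (0:ℝ) < m n := by linarith
      have hxp : (0:ℝ) < X n := by linarith
      have hsmp : (0:ℝ) < Real.sqrt (m n) := Real.sqrt_pos.mpr hmp
      have hsxp : (0:ℝ) < Real.sqrt (X n) := Real.sqrt_pos.mpr hxp
      have hceil : (KK n : ℝ) ≤ Real.sqrt (m n) / Real.sqrt (X n) + 1 := by
        simp only [hKK_def]
        exact (Nat.ceil_lt_add_one (by positivity)).le
      have heq : (Real.sqrt (m n) / Real.sqrt (X n) + 1) / (Real.sqrt (m n) * X n)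
          = (Real.sqrt (X n) * X n)⁻¹ + (Real.sqrt (m n) * X n)⁻¹ := by
        field_simp
      calc (KK n : ℝ) / (Real.sqrt (m n) * X n)
          ≤ (Real.sqrt (m n) / Real.sqrt (X n) + 1) / (Real.sqrt (m n) * X n) := by gcongr
        _ = _ := heq
  have hrho'K : Tendsto (fun n => rho' n ^ KK n) atTop (nhds 0) := by
    have hbd : Tendsto (fun n => Real.exp (-(Real.sqrt (X n) * ((m n:ℝ) / lam n))))
        atTop (nhds 0) := by
      have h1 : Tendsto (fun n => Real.sqrt (X n) * ((m n:ℝ) / lam n)) atTop atTop :=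
        Tendsto.atTop_mul_pos one_pos (sqrt_tendsto_atTop.comp hXtop) hmolam
      exact Real.tendsto_exp_atBot.comp (tendsto_neg_atTop_atBot.comp h1)
    apply tendsto_of_tendsto_of_tendsto_of_le_of_le' tendsto_const_nhds hbd ?_ ?_
    · filter_upwards [hKfacts] with n hKf
      obtain ⟨hK1, hKm, hmlam⟩ := hKf
      have hmp : (0:ℝ) < m n := by exact_mod_cast hm n
      have hlam0 : (0:ℝ) < lam n := lt_of_lt_of_le hmp hmlam
      have hKc : (KK n : ℝ) ≤ (m n : ℝ) := by exact_mod_cast hKm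
      have : 0 ≤ rho' n := by
        simp only [hrho'_def]
        apply div_nonneg (by linarith) hlam0.le
      positivity
    · filter_upwards [hKfacts, hm4, hx1] with n hKf h4 h1x
      obtain ⟨hK1, hKm, hmlam⟩ := hKf
      have hmp : (0:ℝ) < m n := by linarith
      have hxp : (0:ℝ) < X n := by linarith
      have hsmp : (0:ℝ) < Real.sqrt (m n) := Real.sqrt_pos.mpr hmp
      have hsxp : (0:ℝ) < Real.sqrt (X n) := Real.sqrt_pos.mpr hxp
      have hlam0 : (0:ℝ) < lam n := lt_of_lt_of_le hmp hmlam
      have hKc : (KK n : ℝ) ≤ (m n : ℝ) := by exact_mod_cast hKm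
      have hK1c : (1:ℝ) ≤ (KK n : ℝ) := by exact_mod_cast hK1
      have hrho'0 : 0 ≤ rho' n := by
        simp only [hrho'_def]
        apply div_nonneg (by linarith) hlam0.le
      have s1 : rho' n ^ KK n ≤ Real.exp ((rho' n - 1) * KK n) := by
        calc rho' n ^ KK n ≤ Real.exp (rho' n - 1) ^ KK n := by
              apply pow_le_pow_left₀ hrho'0
              linarith [Real.add_one_le_exp (rho' n - 1)]
          _ = Real.exp ((rho' n - 1) * KK n) := by
              rw [← Real.exp_nat_mul]
              ring_nf
      have hKlow : Real.sqrt (m n) / Real.sqrt (X n) ≤ (KK n : ℝ) := by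
        simp only [hKK_def]
        exact Nat.le_ceil _
      have e3 : Real.sqrt (m n) / Real.sqrt (X n) * (Real.sqrt (m n) * X n)
          = (m n:ℝ) * Real.sqrt (X n) := by
        rw [div_mul_eq_mul_div, show Real.sqrt (m n) * (Real.sqrt (m n) * X n)
          = (Real.sqrt (m n) * Real.sqrt (m n)) * X n by ring, Real.mul_self_sqrt hmp.le,
          mul_div_assoc, Real.div_sqrt]
      have hrme : rho' n - 1 = -((Real.sqrt (m n) * X n + (KK n:ℝ)) / lam n) := by
        simp only [hrho'_def, hlam_def]
        field_simp
        ring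
      have s2 : (rho' n - 1) * KK n ≤ -(Real.sqrt (X n) * ((m n:ℝ) / lam n)) := by
        rw [hrme]
        have hnum : (m n:ℝ) * Real.sqrt (X n) ≤ (KK n:ℝ) * (Real.sqrt (m n) * X n + (KK n:ℝ)) := by
          calc (m n:ℝ) * Real.sqrt (X n)
              = Real.sqrt (m n) / Real.sqrt (X n) * (Real.sqrt (m n) * X n) := e3.symm
            _ ≤ (KK n:ℝ) * (Real.sqrt (m n) * X n) := by
                apply mul_le_mul_of_nonneg_right hKlow (by positivity)
            _ ≤ (KK n:ℝ) * (Real.sqrt (m n) * X n + (KK n:ℝ)) := by nlinarith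
        rw [show -((Real.sqrt (m n) * X n + (KK n:ℝ)) / lam n) * (KK n:ℝ)
          = -(((KK n:ℝ) * (Real.sqrt (m n) * X n + (KK n:ℝ))) / lam n) by ring,
          show -(Real.sqrt (X n) * ((m n:ℝ) / lam n)) = -((m n:ℝ) * Real.sqrt (X n) / lam n) by ring]
        rw [neg_le_neg_iff]
        gcongr
      calc rho' n ^ KK n ≤ Real.exp ((rho' n - 1) * KK n) := s1
        _ ≤ Real.exp (-(Real.sqrt (X n) * ((m n:ℝ) / lam n))) := Real.exp_le_exp.mpr s2
  -- E → 1 via sandwich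
  have hlow : Tendsto (fun n => (1 - rho' n ^ KK n) *
      ((1 + (Real.sqrt (m n) * X n)⁻¹) / (1 + (KK n:ℝ) / (Real.sqrt (m n) * X n))))
      atTop (nhds 1) := by
    have h1 := (tendsto_const_nhds (x := (1:ℝ))).sub hrho'K
    rw [sub_zero] at h1
    have hinv0 : Tendsto (fun n => (Real.sqrt (m n) * X n)⁻¹) atTop (nhds 0) :=
      hsmx.inv_tendsto_atTop.congr fun n => rfl
    have h2 := (tendsto_const_nhds (x := (1:ℝ))).add hinv0
    rw [add_zero] at h2
    have h3 := (tendsto_const_nhds (x := (1:ℝ))).add hKr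
    rw [add_zero] at h3
    have h4 := h2.div h3 one_ne_zero
    rw [show (1:ℝ)/1 = 1 by norm_num] at h4
    have h := h1.mul h4
    rwa [mul_one] at h
  have hE1 : Tendsto E atTop (nhds 1) := by
    apply tendsto_of_tendsto_of_tendsto_of_le_of_le' hlow tendsto_const_nhds ?_ ?_
    · filter_upwards [hKfacts, hm4, hx1] with n hKf h4 h1x
      obtain ⟨hK1, hKm, hmlam⟩ := hKf
      have hmp : (0:ℝ) < m n := by linarith
      have hxp : (0:ℝ) < X n := by linarith
      have hsmp : (0:ℝ) < Real.sqrt (m n) := Real.sqrt_pos.mpr hmp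
      have hsmxp : (0:ℝ) < Real.sqrt (m n) * X n := by positivity
      have hlam0 : (0:ℝ) < lam n := lt_of_lt_of_le hmp hmlam
      have hKc : (KK n : ℝ) ≤ (m n : ℝ) := by exact_mod_cast hKm
      have hK1c : (1:ℝ) ≤ (KK n : ℝ) := by exact_mod_cast hK1
      have http : (0:ℝ) < tt n := by simp only [htt_def]; positivity
      have h1rho : 1 - rho n = (Real.sqrt (m n) * X n + 1) / lam n := by
        simp only [hrho_def, hlam_def]
        field_simp
        ring
      have h1rho' : 1 - rho' n = (Real.sqrt (m n) * X n + (KK n:ℝ)) / lam n := by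
        simp only [hrho'_def, hlam_def]
        field_simp
        ring
      have h1rhop : (0:ℝ) < 1 - rho n := by rw [h1rho]; positivity
      have h1rho'p : (0:ℝ) < 1 - rho' n := by rw [h1rho']; positivity
      have hlo := (sandwich_aux (m n) (KK n) hK1 hKm (lam n) hmlam).1
      have hloS : tt n * ((1 - rho' n ^ KK n) / (1 - rho' n)) ≤ S (m n) (lam n) := by
        simpa only [S, htt_def, hrho'_def] using hlo
      have hratio : (1 - rho' n ^ KK n) * ((1 + (Real.sqrt (m n) * X n)⁻¹)
          / (1 + (KK n:ℝ) / (Real.sqrt (m n) * X n)))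
          = (1 - rho' n ^ KK n) / (1 - rho' n) * (1 - rho n) := by
        have hc1 : Real.sqrt (m n) * X n ≠ 0 := by positivity
        have hc2 : Real.sqrt (m n) * X n + (KK n:ℝ) ≠ 0 := by positivity
        have hc3 : lam n ≠ 0 := hlam0.ne'
        rw [h1rho, h1rho']
        field_simp
      rw [hE_def]
      simp only
      rw [hratio, le_div_iff₀ http]
      calc (1 - rho' n ^ KK n) / (1 - rho' n) * (1 - rho n) * tt n
          = tt n * ((1 - rho' n ^ KK n) / (1 - rho' n)) * (1 - rho n) := by ring
        _ ≤ S (m n) (lam n) * (1 - rho n) := by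
            apply mul_le_mul_of_nonneg_right hloS h1rhop.le
    · filter_upwards [hKfacts, hm4, hx1] with n hKf h4 h1x
      obtain ⟨hK1, hKm, hmlam⟩ := hKf
      have hmp : (0:ℝ) < m n := by linarith
      have hxp : (0:ℝ) < X n := by linarith
      have hsmp : (0:ℝ) < Real.sqrt (m n) := Real.sqrt_pos.mpr hmp
      have hlam0 : (0:ℝ) < lam n := lt_of_lt_of_le hmp hmlam
      have http : (0:ℝ) < tt n := by simp only [htt_def]; positivity
      have h1rho : 1 - rho n = (Real.sqrt (m n) * X n + 1) / lam n := by
        simp only [hrho_def, hlam_def]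
        field_simp
        ring
      have h1rhop : (0:ℝ) < 1 - rho n := by rw [h1rho]; positivity
      have hup := (sandwich_aux (m n) (KK n) hK1 hKm (lam n) hmlam).2
      have hupS : S (m n) (lam n) ≤ tt n * (1 / (1 - rho n)) := by
        simpa only [S, htt_def, hrho_def] using hup
      rw [hE_def]
      simp only
      rw [div_le_one http]
      calc S (m n) (lam n) * (1 - rho n) ≤ tt n * (1 / (1 - rho n)) * (1 - rho n) := by
            apply mul_le_mul_of_nonneg_right hupS h1rhop.le
        _ = tt n := by field_simp
  -- the main Gaussian-type term D → 0
  have hD : Tendsto (fun n => (m n:ℝ) * (Real.log (1 + U n) - U n + U n ^ 2 / 2))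
      atTop (nhds 0) := by
    have hb : Tendsto (fun n => 2 * (X n ^ 3 / Real.sqrt (m n))) atTop (nhds 0) := by
      have h := hX3.const_mul 2
      rwa [mul_zero] at h
    apply squeeze_zero_norm' ?_ hb
    filter_upwards [hU0', hU0.eventually_lt_const (by norm_num : (0:ℝ) < 1/2), hm4, hx1]
      with n hu0 hu2 hm4' h1x
    have hmp : (0:ℝ) < m n := by linarith
    have hxp : (0:ℝ) < X n := by linarith
    have hsmp : (0:ℝ) < Real.sqrt (m n) := Real.sqrt_pos.mpr hmp
    have habs := Real.abs_log_sub_add_sum_range_le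
      (x := -U n) (by rw [abs_neg, abs_of_nonneg hu0]; linarith) 2
    have hsum : (∑ i ∈ Finset.range 2, (-U n) ^ (i+1) / ((i:ℝ)+1)) = -U n + U n^2/2 := by
      rw [Finset.sum_range_succ, Finset.sum_range_one]
      norm_num
    rw [hsum, sub_neg_eq_add, abs_neg, abs_of_nonneg hu0] at habs
    norm_num at habs
    have e1 : Real.log (1 + U n) - U n + U n^2/2 = -U n + U n^2/2 + Real.log (1 + U n) := by ring
    have e2 : (m n:ℝ) * U n^3 = X n^3 / Real.sqrt (m n) := by
      simp only [hU_def]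
      rw [div_pow, show Real.sqrt (m n)^3 = (m n:ℝ) * Real.sqrt (m n) by
        rw [pow_succ, Real.sq_sqrt hmp.le]]
      field_simp
    rw [Real.norm_eq_abs, abs_mul, abs_of_nonneg hmp.le, e1]
    calc (m n:ℝ) * |(-U n + U n^2/2) + Real.log (1 + U n)|
        ≤ (m n:ℝ) * (U n^3 / (1 - U n)) := mul_le_mul_of_nonneg_left habs hmp.le
      _ ≤ (m n:ℝ) * (2 * U n^3) := by
          have h1u : (0:ℝ) < 1 - U n := by linarith
          have : U n^3 / (1 - U n) ≤ 2 * U n^3 := by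
            rw [div_le_iff₀ h1u]
            nlinarith [pow_nonneg hu0 3]
          exact mul_le_mul_of_nonneg_left this hmp.le
      _ = 2 * (X n^3 / Real.sqrt (m n)) := by rw [← e2]; ring
  -- limit of the explicit expression GG
  set GG : ℕ → ℝ := fun n => (m n:ℝ) * (Real.log (1 + U n) - U n + U n^2/2) - stirfun (m n)
      - Real.log (1 + (Real.sqrt (m n) * X n)⁻¹)
      + (-(y * R n) - y^2/(4*L n) - Real.log 2/2 - Real.log (W n)) - Real.log (2*π)/2
      with hGG_def
  have hy4 : Tendsto (fun n => y^2 / (4 * L n)) atTop (nhds 0) :=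
    tendsto_const_nhds.div_atTop (hL.const_mul_atTop four_pos)
  have hlogw : Tendsto (fun n => Real.log (W n)) atTop (nhds 0) := by
    have h := (Real.continuousAt_log one_ne_zero).tendsto.comp hW1
    rwa [Real.log_one] at h
  have hGlim : Tendsto GG atTop (nhds (-y - Real.log 2/2 - Real.log (2*π)/2)) := by
    have h1 := (hR1.const_mul y).neg
    have h2 := ((h1.sub hy4).sub_const (Real.log 2/2)).sub hlogw
    have h3 := ((hD.sub hstir0).sub hlinv).add h2
    have h4 := h3.sub_const (Real.log (2*π)/2)
    have hval : (0:ℝ) - 0 - 0 + (-(y*1) - 0 - Real.log 2/2 - 0) - Real.log (2*π)/2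
        = -y - Real.log 2/2 - Real.log (2*π)/2 := by ring
    rw [hval] at h4
    exact h4.congr fun n => by simp only [hGG_def]
  -- the big identity : GG n = log (P n) eventually
  have hbig : (fun n => GG n) =ᶠ[atTop] fun n => Real.log (P n) := by
    filter_upwards [hKfacts, hm4, hx1, hL.eventually_ge_atTop 3, eventually_ge_atTop 1, hU0']
      with n hKf h4 h1x hL3 hn1 hu0
    obtain ⟨hK1, hKm, hmlam⟩ := hKf
    have hmp : (0:ℝ) < m n := by linarith
    have hsmp : (0:ℝ) < Real.sqrt (m n) := Real.sqrt_pos.mpr hmp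
    have hxp : (0:ℝ) < X n := by linarith
    have hsmxp : (0:ℝ) < Real.sqrt (m n) * X n := by positivity
    have hlam0 : (0:ℝ) < lam n := lt_of_lt_of_le hmp hmlam
    have hlamne : lam n ≠ 0 := hlam0.ne'
    have hLp : (0:ℝ) < L n := by linarith
    have hlogLle : Real.log (L n) ≤ L n - 1 := Real.log_le_sub_one_of_pos hLp
    have h2Lp : (0:ℝ) < 2 * L n - Real.log (L n) := by linarith
    have hs2Lp : (0:ℝ) < Real.sqrt (2 * L n) := Real.sqrt_pos.mpr (by linarith)
    have hWp : (0:ℝ) < W n := by simp only [hW_def]; positivity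
    have h1up : (0:ℝ) < 1 + U n := by linarith
    have hnp : (0:ℝ) < (n:ℝ) := by exact_mod_cast hn1
    have http : (0:ℝ) < tt n := by simp only [htt_def]; positivity
    have h1rho : 1 - rho n = (Real.sqrt (m n) * X n + 1) / lam n := by
      simp only [hrho_def, hlam_def]
      field_simp
      ring
    have h1rhop : (0:ℝ) < 1 - rho n := by rw [h1rho]; positivity
    have hfacp : (0:ℝ) < ((Nat.factorial (m n - 1)):ℝ) := by
      exact_mod_cast Nat.factorial_pos _
    have eq1 : Real.log (P n) = L n + ((m n:ℝ) - 1) * Real.log (lam n)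
        - Real.log ((Nat.factorial (m n - 1)):ℝ) - lam n - Real.log (1 - rho n) := by
      simp only [hP_def]
      rw [Real.log_div (by positivity) h1rhop.ne',
        Real.log_mul (by positivity) (Real.exp_ne_zero _),
        Real.log_mul hnp.ne' http.ne', Real.log_exp]
      simp only [htt_def]
      rw [Real.log_div (by positivity) hfacp.ne', Real.log_pow,
        Nat.cast_sub (hm n), Nat.cast_one]
      simp only [hL_def]
      ring
    have hlamU : lam n = (m n:ℝ) * (1 + U n) := by
      simp only [hlam_def, hU_def]
      field_simp
      nlinarith [Real.sq_sqrt hmp.le]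
    have eq2 : Real.log (lam n) = Real.log (m n) + Real.log (1 + U n) := by
      rw [hlamU, Real.log_mul hmp.ne' h1up.ne']
    have eq3 : Real.log ((Nat.factorial (m n)):ℝ)
        = Real.log (m n) + Real.log ((Nat.factorial (m n - 1)):ℝ) := by
      have h : (m n).factorial = (m n) * (m n - 1).factorial := by
        conv_lhs => rw [show m n = (m n - 1) + 1 from (Nat.sub_add_cancel (hm n)).symm]
        rw [Nat.factorial_succ, Nat.sub_add_cancel (hm n)]
      rw [h]
      push_cast
      rw [Real.log_mul hmp.ne' hfacp.ne']
    have eq4 : Real.log ((Nat.factorial (m n)):ℝ) = stirfun (m n)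
        + ((m n:ℝ) * Real.log (m n) - (m n:ℝ) + (Real.log (2*π) + Real.log (m n))/2) := by
      simp only [stirfun]
      rw [Real.log_mul (by positivity) hmp.ne']
      ring
    have eq3' : Real.log ((Nat.factorial (m n - 1)):ℝ) = stirfun (m n)
        + ((m n:ℝ) * Real.log (m n) - (m n:ℝ) + (Real.log (2*π) + Real.log (m n))/2)
        - Real.log (m n) := by
      rw [← eq4, eq3]
      ring
    have eq5 : Real.log (1 - rho n) = (Real.log (m n)/2 + Real.log (X n)
        + Real.log (1 + (Real.sqrt (m n) * X n)⁻¹)) - Real.log (lam n) := by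
      rw [h1rho, Real.log_div (by positivity) hlamne]
      congr 1
      have hfac2 : Real.sqrt (m n) * X n + 1
          = (Real.sqrt (m n) * X n) * (1 + (Real.sqrt (m n) * X n)⁻¹) := by
        field_simp
      rw [hfac2, Real.log_mul (by positivity) (by positivity),
        Real.log_mul hsmp.ne' hxp.ne', Real.log_sqrt hmp.le]
    have eq6 : Real.log (X n) = Real.log (W n) + (Real.log 2 + Real.log (L n))/2 := by
      have hXe : X n = W n * Real.sqrt (2 * L n) := by
        simp only [hW_def]
        field_simp
      rw [hXe, Real.log_mul hWp.ne' hs2Lp.ne', Real.log_sqrt (by linarith),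
        Real.log_mul two_ne_zero hLp.ne']
    have eq7 : lam n = (m n:ℝ) + (m n:ℝ) * U n := by
      rw [hlamU]; ring
    have eq8 : (m n:ℝ) * U n^2 = X n^2 := by
      simp only [hU_def]
      rw [div_pow, Real.sq_sqrt hmp.le]
      field_simp
    have eq9 : X n^2 = 2 * L n - Real.log (L n) + 2*(y * R n) + 2*(y^2/(4*L n)) := by
      have hsq : A n^2 = 2*L n - Real.log (L n) := by
        simp only [hA_def]
        exact Real.sq_sqrt h2Lp.le
      have hsq2 : (y / Real.sqrt (2*L n))^2 = 2*(y^2/(4*L n)) := by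
        rw [div_pow, Real.sq_sqrt (by linarith)]
        rw [div_eq_iff (by positivity : (2:ℝ) * L n ≠ 0)]
        field_simp
        ring
      have hRe : A n * (y / Real.sqrt (2*L n)) = y * R n := by
        simp only [hR_def]
        ring
      calc X n^2 = A n^2 + 2*(A n * (y/Real.sqrt (2*L n))) + (y/Real.sqrt (2*L n))^2 := by
            simp only [hX_def]; ring
        _ = 2 * L n - Real.log (L n) + 2*(y * R n) + 2*(y^2/(4*L n)) := by rw [hsq, hsq2, hRe]
    simp only [hGG_def]
    rw [eq1, eq5, eq6, eq3', eq2]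
    linear_combination eq7 + eq8/2 + eq9/2
  have hPpos : ∀ᶠ n in atTop, 0 < P n := by
    filter_upwards [hKfacts, hm4, hx1, eventually_ge_atTop 1] with n hKf h4 h1x hn1
    obtain ⟨hK1, hKm, hmlam⟩ := hKf
    have hmp : (0:ℝ) < m n := by linarith
    have hxp : (0:ℝ) < X n := by linarith
    have hsmp : (0:ℝ) < Real.sqrt (m n) := Real.sqrt_pos.mpr hmp
    have hlam0 : (0:ℝ) < lam n := lt_of_lt_of_le hmp hmlam
    have http : (0:ℝ) < tt n := by simp only [htt_def]; positivity
    have h1rho : 1 - rho n = (Real.sqrt (m n) * X n + 1) / lam n := by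
      simp only [hrho_def, hlam_def]
      field_simp
      ring
    have h1rhop : (0:ℝ) < 1 - rho n := by rw [h1rho]; positivity
    have hnp : (0:ℝ) < (n:ℝ) := by exact_mod_cast hn1
    simp only [hP_def]
    exact div_pos (mul_pos (mul_pos hnp http) (Real.exp_pos _)) h1rhop
  have hlogP : Tendsto (fun n => Real.log (P n)) atTop
      (nhds (-y - Real.log 2/2 - Real.log (2*π)/2)) := hGlim.congr' hbig
  have hexp : Real.exp (-y - Real.log 2/2 - Real.log (2*π)/2)
      = Real.exp (-y) / (2 * Real.sqrt π) := by
    have hsp : (0:ℝ) < 2 * Real.sqrt π := by positivity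
    have hsq4 : (2:ℝ) * Real.sqrt π = Real.sqrt (4*π) := by
      rw [show (4:ℝ)*π = 2^2*π by ring, Real.sqrt_mul (by positivity) π,
        Real.sqrt_sq (by norm_num : (0:ℝ) ≤ 2)]
    have h4pi : Real.log (4*π) = Real.log 2 + Real.log (2*π) := by
      rw [show (4:ℝ)*π = 2*(2*π) by ring]
      exact Real.log_mul two_ne_zero (by positivity)
    have hlog : Real.log 2/2 + Real.log (2*π)/2 = Real.log (2 * Real.sqrt π) := by
      rw [hsq4, Real.log_sqrt (by positivity), h4pi]
      ring
    rw [show -y - Real.log 2/2 - Real.log (2*π)/2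
      = -y - (Real.log 2/2 + Real.log (2*π)/2) by ring, hlog, Real.exp_sub,
      Real.exp_log hsp]
  have hPlim : Tendsto P atTop (nhds (Real.exp (-y)/(2*Real.sqrt π))) := by
    have h := (Real.continuous_exp.tendsto _).comp hlogP
    rw [hexp] at h
    apply h.congr'
    filter_upwards [hPpos] with n hp
    exact Real.exp_log hp
  have hfinal := hPlim.mul hE1
  rw [mul_one] at hfinal
  apply hfinal.congr'
  filter_upwards [hKfacts, hm4, hx1] with n hKf h4 h1x
  obtain ⟨hK1, hKm, hmlam⟩ := hKf
  have hmp : (0:ℝ) < m n := by linarith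
  have hxp : (0:ℝ) < X n := by linarith
  have hsmp : (0:ℝ) < Real.sqrt (m n) := Real.sqrt_pos.mpr hmp
  have hlam0 : (0:ℝ) < lam n := lt_of_lt_of_le hmp hmlam
  have http : (0:ℝ) < tt n := by simp only [htt_def]; positivity
  have h1rho : 1 - rho n = (Real.sqrt (m n) * X n + 1) / lam n := by
    simp only [hrho_def, hlam_def]
    field_simp
    ring
  have h1rhop : (0:ℝ) < 1 - rho n := by rw [h1rho]; positivity
  have harg : (m n:ℝ) + Real.sqrt (m n) * Real.sqrt (2 * Real.log n - Real.log (Real.log n))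
      + Real.sqrt (m n)/Real.sqrt (2*Real.log n)*y = lam n := by
    simp only [hlam_def, hX_def, hA_def, hL_def]
    ring
  rw [harg]
  simp only [hP_def, hE_def]
  have hcalc : (n:ℝ) * tt n * Real.exp (-lam n) / (1 - rho n)
      * (S (m n) (lam n) * (1 - rho n) / tt n)
      = (n:ℝ) * S (m n) (lam n) * Real.exp (-lam n)
        * ((1 - rho n) / (1 - rho n)) * (tt n / tt n) := by ring
  rw [hcalc, div_self h1rhop.ne', div_self http.ne', mul_one, mul_one]
end

section
/- Let β > 0 be fixed, let α be the unique solution in (β, ∞) of α − β·ln α = β − β·ln β + 1, and let m = m(n) = β·ln n + b(n)·ln n be a sequence of positive integers with b(n)·√(ln n) → 0 as n → ∞. For a fixed real y, set χ(n) := α·ln n + (α(α−β−1)/(β(α−β)))·b(n)·ln n − (α/(2(α−β)))·ln ln n + (α/(α−β))·y. Then [1 − S_m(χ(n))·e^{−χ(n)}]^n → exp( −(1/√(2π))·(√β/(α−β))·e^{−y} ) as n → ∞. Equivalently, for the maximum Δ_{m,n} of n independent Erlang(m,1/n) random variables: P{(Δ_{m,n} − α·n·ln n − (α(α−β−1)/(β(α−β)))·b(n)·n·ln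 n + (α/(2(α−β)))·n·ln ln n)/((α/(α−β))·n) ≤ y} → exp(−(1/√(2π))·(√β/(α−β))·e^{−y}). -/
open MeasureTheory Filter Real

-- remainder bound for log(1+t) - t
lemma aux_rem_bound {t : ℝ} (h : |t| ≤ 1/2) : |Real.log (1+t) - t| ≤ 2*t^2 := by
  have h1 : |(-t)| < 1 := by rw [abs_neg]; linarith
  have h2 := Real.abs_log_sub_add_sum_range_le h1 1
  simp only [Finset.sum_range_one, pow_one, Nat.cast_zero, zero_add, div_one] at h2
  have h3 : (1:ℝ) - -t = 1 + t := by ring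
  rw [h3, abs_neg] at h2
  have h4 : |Real.log (1+t) - t| = |(-t) + Real.log (1+t)| := by
    rw [show (-t) + Real.log (1+t) = Real.log (1+t) - t by ring]
  rw [h4]
  refine h2.trans ?_
  have h5 : (1:ℝ)/2 ≤ 1 - |t| := by linarith
  have h6 : |t|^2/(1-|t|) ≤ |t|^2/(1/2) := by
    apply div_le_div_of_nonneg_left (by positivity) (by norm_num) h5
  refine h6.trans ?_
  rw [sq_abs]
  ring_nf
  nlinarith [sq_nonneg t]


lemma aux_one_sub_pow {p : ℕ → ℝ} {c : ℝ} (hpos : ∀ᶠ n : ℕ in atTop, 0 < p n)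
    (h : Tendsto (fun n : ℕ => n * p n) atTop (nhds c)) :
    Tendsto (fun n : ℕ => (1 - p n) ^ n) atTop (nhds (Real.exp (-c))) := by
  have hp0 : Tendsto p atTop (nhds 0) := by
    have h1 : Tendsto (fun n : ℕ => ((n : ℝ) * p n) * (n : ℝ)⁻¹) atTop (nhds (c * 0)) :=
      h.mul (tendsto_inv_atTop_zero.comp tendsto_natCast_atTop_atTop)
    rw [mul_zero] at h1
    refine h1.congr' ?_
    filter_upwards [eventually_ge_atTop 1] with n hn
    have : (n : ℝ) ≠ 0 := by positivity
    field_simp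
  have hd : HasDerivAt (fun t : ℝ => Real.log (1 - t)) (-1) 0 := by
    have h1 : HasDerivAt (fun t : ℝ => 1 - t) (-1) 0 := (hasDerivAt_id 0).const_sub 1
    have h2 := (Real.hasDerivAt_log (by norm_num : (1:ℝ) - 0 ≠ 0)).comp 0 h1
    simpa [Function.comp_def] using h2
  have hpne : Tendsto p atTop (nhdsWithin 0 {(0:ℝ)}ᶜ) := by
    refine tendsto_nhdsWithin_of_tendsto_nhds_of_eventually_within _ hp0 ?_
    filter_upwards [hpos] with n hn
    exact ne_of_gt hn
  have hslope : Tendsto (fun n : ℕ => Real.log (1 - p n) / p n) atTop (nhds (-1)) := by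
    have h3 := (hasDerivAt_iff_tendsto_slope.mp hd).comp hpne
    refine h3.congr ?_
    intro n
    simp [slope_def_field, Function.comp]
  have hnlog : Tendsto (fun n : ℕ => (n : ℝ) * Real.log (1 - p n)) atTop (nhds (-c)) := by
    have h4 := h.mul hslope
    rw [show c * (-1) = -c by ring] at h4
    refine h4.congr' ?_
    filter_upwards [hpos] with n hn
    field_simp
  refine Tendsto.congr' ?_ (Real.continuous_exp.continuousAt.tendsto.comp hnlog)
  filter_upwards [hpos, hp0.eventually (eventually_lt_nhds one_pos)] with n hn hn1
  show rexp _ = _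
  rw [Real.exp_nat_mul, Real.exp_log (by linarith)]


lemma aux_R_tendsto {m : ℕ → ℕ} {x : ℕ → ℝ} {ρ : ℝ} (hρ0 : 0 ≤ ρ) (hρ1 : ρ < 1)
    (hm : Tendsto m atTop atTop) (hx : Tendsto x atTop atTop)
    (hr : Tendsto (fun n => (m n : ℝ) / x n) atTop (nhds ρ)) :
    Tendsto (fun n => ∑ j ∈ Finset.range (m n), ((m n - 1).descFactorial j : ℝ) / x n ^ j)
      atTop (nhds ((1 - ρ)⁻¹)) := by
  have hg1 : 0 < 1 - ρ := by linarith
  set g : ℝ := (1 - ρ)⁻¹ with hgdef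
  have hg0 : 0 < g := by positivity
  have hxinv : Tendsto (fun n => (x n)⁻¹) atTop (nhds 0) := tendsto_inv_atTop_zero.comp hx
  -- r n = (m n - 1)/x n → ρ
  have hrr : Tendsto (fun n => ((m n : ℝ) - 1) / x n) atTop (nhds ρ) := by
    have := hr.sub hxinv
    rw [sub_zero] at this
    refine this.congr fun n => ?_
    ring
  rw [Metric.tendsto_nhds]
  intro ε hε
  -- choose k with g * ρ ^ k < ε / 2
  obtain ⟨k, hk⟩ : ∃ k : ℕ, g * ρ ^ k < ε / 2 := by
    have h0 : Tendsto (fun k : ℕ => g * ρ ^ k) atTop (nhds (g * 0)) :=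
      tendsto_const_nhds.mul (tendsto_pow_atTop_nhds_zero_of_lt_one hρ0 hρ1)
    rw [mul_zero] at h0
    exact ((h0.eventually_lt_const (by positivity)).exists)
  -- r' n = (m n - k)/x n → ρ
  have hrk : Tendsto (fun n => ((m n : ℝ) - k) / x n) atTop (nhds ρ) := by
    have := hr.sub (hxinv.const_mul (k : ℝ))
    rw [mul_zero, sub_zero] at this
    refine this.congr fun n => ?_
    ring
  -- lower sequence tends to partial geometric sum
  have hLow : Tendsto (fun n => ∑ j ∈ Finset.range k, (((m n : ℝ) - k) / x n) ^ j) atTop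
      (nhds (∑ j ∈ Finset.range k, ρ ^ j)) :=
    tendsto_finset_sum _ (fun j _ => hrk.pow j)
  have hsk : g - ε / 2 < ∑ j ∈ Finset.range k, ρ ^ j := by
    have : ∑ j ∈ Finset.range k, ρ ^ j = g - g * ρ ^ k := by
      have hne1 : (1:ℝ) - ρ ≠ 0 := ne_of_gt hg1
      have hne2 : ρ - 1 ≠ 0 := by intro h; apply hne1; linarith
      rw [geom_sum_eq (by linarith : ρ ≠ 1) k, hgdef]
      field_simp
      ring
    rw [this]
    linarith
  -- upper sequence tends to g
  have hU : Tendsto (fun n => (1 - ((m n : ℝ) - 1) / x n)⁻¹) atTop (nhds g) :=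
    ((tendsto_const_nhds.sub hrr).inv₀ (by simpa using hg1.ne'))
  have hLow' := hLow.eventually_const_lt (show g - ε < ∑ j ∈ Finset.range k, ρ ^ j by linarith)
  have hU' := hU.eventually_lt_const (show g < g + ε by linarith)
  have hrlt := hrr.eventually_lt_const hρ1
  filter_upwards [hLow', hU', hrlt, hx.eventually_gt_atTop 0, hm.eventually_ge_atTop (k + 1)]
    with n h1 h2 h3 hx0 hmk
  set f := ∑ j ∈ Finset.range (m n), ((m n - 1).descFactorial j : ℝ) / x n ^ j with hfdef
  have hkm : k ≤ m n := le_trans (Nat.le_succ k) hmk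
  have h1m : 1 ≤ m n := by omega
  have hcast1 : ((m n - 1 : ℕ) : ℝ) = (m n : ℝ) - 1 := by
    rw [Nat.cast_sub h1m, Nat.cast_one]
  have hcastk : ((m n - k : ℕ) : ℝ) = (m n : ℝ) - k := by
    rw [Nat.cast_sub hkm]
  have hr0 : 0 ≤ ((m n : ℝ) - 1) / x n := by
    apply div_nonneg _ hx0.le
    have : (1 : ℝ) ≤ (m n : ℝ) := by exact_mod_cast h1m
    linarith
  -- upper bound
  have hub : f ≤ (1 - ((m n : ℝ) - 1) / x n)⁻¹ := by
    have step1 : f ≤ ∑ j ∈ Finset.range (m n), (((m n : ℝ) - 1) / x n) ^ j := by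
      apply Finset.sum_le_sum
      intro j _
      rw [div_pow, ← hcast1]
      apply div_le_div_of_nonneg_right ?_ (by positivity)
      · exact_mod_cast Nat.descFactorial_le_pow _ _
    refine step1.trans ?_
    rw [geom_sum_eq (by linarith : ((m n : ℝ) - 1) / x n ≠ 1)]
    set r := ((m n : ℝ) - 1) / x n with hrdef
    have h1r : 0 < 1 - r := by linarith
    have hner : r - 1 ≠ 0 := by intro h; simp only [sub_eq_zero] at h; exact (by linarith : r ≠ 1) h
    have heq : (r ^ m n - 1) / (r - 1) = (1 - r ^ m n) * (1 - r)⁻¹ := by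
      field_simp
      ring
    rw [heq]
    calc (1 - r ^ m n) * (1 - r)⁻¹ ≤ 1 * (1 - r)⁻¹ := by
          apply mul_le_mul_of_nonneg_right _ (inv_nonneg.mpr h1r.le)
          have := pow_nonneg hr0 (m n)
          simp only [hrdef] at this ⊢
          linarith
      _ = (1 - r)⁻¹ := one_mul _
  -- lower bound
  have hlb : ∑ j ∈ Finset.range k, (((m n : ℝ) - k) / x n) ^ j ≤ f := by
    have step1 : ∑ j ∈ Finset.range k, (((m n : ℝ) - k) / x n) ^ j
        ≤ ∑ j ∈ Finset.range k, ((m n - 1).descFactorial j : ℝ) / x n ^ j := by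
      apply Finset.sum_le_sum
      intro j hj
      rw [div_pow, ← hcastk]
      apply div_le_div_of_nonneg_right ?_ (by positivity)
      · have hd : (m n - k) ^ j ≤ (m n - 1).descFactorial j := by
          calc (m n - k) ^ j ≤ (m n - j) ^ j := by
                apply Nat.pow_le_pow_left
                exact Nat.sub_le_sub_left (le_of_lt (Finset.mem_range.mp hj)) _
            _ = (m n - 1 + 1 - j) ^ j := by
                congr 1
                omega
            _ ≤ (m n - 1).descFactorial j := Nat.pow_sub_le_descFactorial _ _
        exact_mod_cast hd
    refine step1.trans ?_
    apply Finset.sum_le_sum_of_subset_of_nonneg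
    · exact Finset.range_subset_range.mpr hkm
    · intro j _ _
      positivity
  rw [Real.dist_eq, abs_sub_lt_iff]
  constructor
  · linarith [hlb.trans_lt' h1, hlb]
  · linarith [hub.trans_lt h2]



set_option maxHeartbeats 2000000 in
lemma aux_H {α β y : ℝ} (hβ : 0 < β) (hαβ : β < α)
    (hP : Real.log α - Real.log β = (α - β - 1) / β)
    {L u χ k : ℕ → ℝ} (hL : Tendsto L atTop atTop)
    (hu : Tendsto (fun n => u n * Real.sqrt (L n)) atTop (nhds 0))
    (hχ : ∀ n, χ n = α * L n + α*(α-β-1)/(β*(α-β)) * u n * L n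
        - α/(2*(α-β)) * Real.log (L n) + α/(α-β) * y)
    (hk : ∀ n, k n = (β + u n) * L n - 1) :
    Tendsto (fun n => L n - χ n + k n * Real.log (χ n) - k n * Real.log (k n) + k n
        - (1/2) * Real.log (2 * k n)) atTop
      (nhds (-y - (1/2)*Real.log 2 + (1/2)*Real.log β - Real.log α)) := by
  have hα0 : 0 < α := hβ.trans hαβ
  have hab : 0 < α - β := sub_pos.2 hαβ
  set δ : ℝ := α*(α-β-1)/(β*(α-β)) with hδ
  set γ : ℝ := α/(2*(α-β)) with hγ
  set η : ℝ := α/(α-β) with hη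
  -- basic limits
  have hsL : Tendsto (fun n => Real.sqrt (L n)) atTop atTop := by
    have h1 : Tendsto (fun x : ℝ => x ^ (1/2 : ℝ)) atTop atTop :=
      tendsto_rpow_atTop (by norm_num)
    refine (h1.comp hL).congr fun n => ?_
    simp [Real.sqrt_eq_rpow]
  have hinvsL : Tendsto (fun n => (Real.sqrt (L n))⁻¹) atTop (nhds 0) :=
    tendsto_inv_atTop_zero.comp hsL
  have hinvL : Tendsto (fun n => (L n)⁻¹) atTop (nhds 0) := tendsto_inv_atTop_zero.comp hL
  have hLpos : ∀ᶠ n : ℕ in atTop, 0 < L n := hL.eventually_gt_atTop 0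
  have hu0 : Tendsto u atTop (nhds 0) := by
    have h1 := hu.mul hinvsL
    rw [mul_zero] at h1
    refine h1.congr' ?_
    filter_upwards [hLpos] with n hn
    have : Real.sqrt (L n) ≠ 0 := by positivity
    field_simp
  have hWsL : Tendsto (fun n => Real.log (L n) / Real.sqrt (L n)) atTop (nhds 0) := by
    have h1 : Tendsto (fun x : ℝ => Real.log x / x ^ (1/2:ℝ)) atTop (nhds 0) :=
      (isLittleO_log_rpow_atTop (by norm_num : (0:ℝ) < 1/2)).tendsto_div_nhds_zero
    refine (h1.comp hL).congr fun n => ?_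
    simp [Real.sqrt_eq_rpow]
  have hWL : Tendsto (fun n => Real.log (L n) / L n) atTop (nhds 0) := by
    have h1 := hWsL.mul hinvsL
    rw [mul_zero] at h1
    refine h1.congr' ?_
    filter_upwards [hLpos] with n hn
    have e0 : Real.log (L n) * (Real.sqrt (L n))⁻¹ / Real.sqrt (L n)
        = Real.log (L n) / (Real.sqrt (L n) * Real.sqrt (L n)) := by ring
    show Real.log (L n) / Real.sqrt (L n) * (Real.sqrt (L n))⁻¹ = Real.log (L n) / L n
    rw [div_mul_eq_mul_div, e0, Real.mul_self_sqrt hn.le]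
  have huL2 : Tendsto (fun n => u n * L n * u n) atTop (nhds 0) := by
    have h1 := hu.mul hu
    rw [mul_zero] at h1
    refine h1.congr' ?_
    filter_upwards [hLpos] with n hn
    rw [show u n * Real.sqrt (L n) * (u n * Real.sqrt (L n))
        = u n * (Real.sqrt (L n) * Real.sqrt (L n)) * u n by ring, Real.mul_self_sqrt hn.le]
  have huW : Tendsto (fun n => u n * Real.log (L n)) atTop (nhds 0) := by
    have h1 := hu.mul hWsL
    rw [mul_zero] at h1
    refine h1.congr' ?_
    filter_upwards [hLpos] with n hn
    have hs : Real.sqrt (L n) ≠ 0 := by positivity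
    field_simp
  -- the deviation sequences
  set a : ℕ → ℝ := fun n => δ * u n - γ * (Real.log (L n)/L n) + η*y*(L n)⁻¹ with ha
  set s : ℕ → ℝ := fun n => u n - (L n)⁻¹ with hs
  have ha0 : Tendsto a atTop (nhds 0) := by
    have := ((hu0.const_mul δ).sub (hWL.const_mul γ)).add (hinvL.const_mul (η*y))
    simpa using this
  have hs0 : Tendsto s atTop (nhds 0) := by
    have := hu0.sub hinvL
    simpa using this
  set φ : ℕ → ℝ := fun n => δ*(u n * Real.sqrt (L n)) - γ*(Real.log (L n)/Real.sqrt (L n))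
      + η*y*(Real.sqrt (L n))⁻¹ with hφ
  set ψ : ℕ → ℝ := fun n => u n * Real.sqrt (L n) - (Real.sqrt (L n))⁻¹ with hψ
  have hφ0 : Tendsto φ atTop (nhds 0) := by
    have := ((hu.const_mul δ).sub (hWsL.const_mul γ)).add (hinvsL.const_mul (η*y))
    simpa using this
  have hψ0 : Tendsto ψ atTop (nhds 0) := by
    have := hu.sub hinvsL
    simpa using this
  have hφa : ∀ᶠ n : ℕ in atTop, φ n = Real.sqrt (L n) * a n := by
    filter_upwards [hLpos] with n hn
    have hsne : Real.sqrt (L n) ≠ 0 := by positivity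
    have hLne : L n ≠ 0 := ne_of_gt hn
    have hss : Real.sqrt (L n) * Real.sqrt (L n) = L n := Real.mul_self_sqrt hn.le
    have e1 : Real.log (L n)/L n * Real.sqrt (L n) = Real.log (L n)/Real.sqrt (L n) := by
      rw [div_mul_eq_mul_div, div_eq_div_iff hLne hsne, mul_assoc, hss]
    have e2 : (L n)⁻¹ * Real.sqrt (L n) = (Real.sqrt (L n))⁻¹ := by
      rw [← hss]
      field_simp
      rw [Real.sqrt_sq (Real.sqrt_nonneg _)]
    simp only [hφ, ha]
    rw [show Real.sqrt (L n) * (δ * u n - γ * (Real.log (L n)/L n) + η*y*(L n)⁻¹)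
      = δ*(u n * Real.sqrt (L n)) - γ*(Real.log (L n)/L n * Real.sqrt (L n))
        + η*y*((L n)⁻¹ * Real.sqrt (L n)) by ring, e1, e2]
  have hψs : ∀ᶠ n : ℕ in atTop, ψ n = Real.sqrt (L n) * s n := by
    filter_upwards [hLpos] with n hn
    have hsne : Real.sqrt (L n) ≠ 0 := by positivity
    have hss : Real.sqrt (L n) * Real.sqrt (L n) = L n := Real.mul_self_sqrt hn.le
    have e2 : (L n)⁻¹ * Real.sqrt (L n) = (Real.sqrt (L n))⁻¹ := by
      rw [← hss]
      field_simp
      rw [Real.sqrt_sq (Real.sqrt_nonneg _)]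
    simp only [hψ, hs]
    rw [show Real.sqrt (L n) * (u n - (L n)⁻¹)
      = u n * Real.sqrt (L n) - ((L n)⁻¹ * Real.sqrt (L n)) by ring, e2]
  -- remainder sequences
  set Ra : ℕ → ℝ := fun n => Real.log (1 + a n/α) - a n/α with hRa
  set Rs : ℕ → ℝ := fun n => Real.log (1 + s n/β) - s n/β with hRs
  have haev : ∀ᶠ n : ℕ in atTop, |a n / α| ≤ 1/2 := by
    have h1 := Metric.tendsto_nhds.mp ha0 (α/2) (by positivity)
    filter_upwards [h1] with n hn
    rw [Real.dist_eq, sub_zero] at hn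
    rw [abs_div, abs_of_pos hα0, div_le_iff₀ hα0]
    linarith [hn.le]
  have hsev : ∀ᶠ n : ℕ in atTop, |s n / β| ≤ 1/2 := by
    have h1 := Metric.tendsto_nhds.mp hs0 (β/2) (by positivity)
    filter_upwards [h1] with n hn
    rw [Real.dist_eq, sub_zero] at hn
    rw [abs_div, abs_of_pos hβ, div_le_iff₀ hβ]
    linarith [hn.le]
  have hLRa : Tendsto (fun n => L n * Ra n) atTop (nhds 0) := by
    have hbnd : Tendsto (fun n => (2/α^2) * (φ n * φ n)) atTop (nhds 0) := by
      have := (hφ0.mul hφ0).const_mul (2/α^2)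
      simpa using this
    apply squeeze_zero_norm' _ hbnd
    filter_upwards [hLpos, haev, hφa] with n hn h2 h3
    rw [Real.norm_eq_abs, abs_mul, abs_of_pos hn]
    calc L n * |Ra n| ≤ L n * (2*(a n/α)^2) :=
          mul_le_mul_of_nonneg_left (aux_rem_bound h2) hn.le
      _ = 2/α^2 * (φ n * φ n) := by
          rw [h3]
          have hss : Real.sqrt (L n) * Real.sqrt (L n) = L n := Real.mul_self_sqrt hn.le
          rw [show Real.sqrt (L n) * a n * (Real.sqrt (L n) * a n)
            = (Real.sqrt (L n) * Real.sqrt (L n)) * (a n * a n) by ring, hss]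
          field_simp
  have hLRs : Tendsto (fun n => L n * Rs n) atTop (nhds 0) := by
    have hbnd : Tendsto (fun n => (2/β^2) * (ψ n * ψ n)) atTop (nhds 0) := by
      have := (hψ0.mul hψ0).const_mul (2/β^2)
      simpa using this
    apply squeeze_zero_norm' _ hbnd
    filter_upwards [hLpos, hsev, hψs] with n hn h2 h3
    rw [Real.norm_eq_abs, abs_mul, abs_of_pos hn]
    calc L n * |Rs n| ≤ L n * (2*(s n/β)^2) :=
          mul_le_mul_of_nonneg_left (aux_rem_bound h2) hn.le
      _ = 2/β^2 * (ψ n * ψ n) := by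
          rw [h3]
          have hss : Real.sqrt (L n) * Real.sqrt (L n) = L n := Real.mul_self_sqrt hn.le
          rw [show Real.sqrt (L n) * s n * (Real.sqrt (L n) * s n)
            = (Real.sqrt (L n) * Real.sqrt (L n)) * (s n * s n) by ring, hss]
          field_simp
  have hRs0 : Tendsto Rs atTop (nhds 0) := by
    have h1 : Tendsto (fun n => 1 + s n/β) atTop (nhds 1) := by
      have h1' : Tendsto (fun n : ℕ => (1:ℝ) + s n/β) atTop (nhds (1 + 0/β)) :=
        (tendsto_const_nhds : Tendsto (fun _ : ℕ => (1:ℝ)) atTop (nhds 1)).add (hs0.div_const β)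
      simpa using h1'
    have h2 : Tendsto (fun n => Real.log (1 + s n/β)) atTop (nhds 0) := by
      have := (Real.continuousAt_log (by norm_num : (1:ℝ) ≠ 0)).tendsto.comp h1
      simpa [Function.comp_def] using this
    have := h2.sub (hs0.div_const β)
    simpa using this
  -- the vanishing part E
  set E : ℕ → ℝ := fun n => s n*(a n*L n)/α - s n*(s n*L n)/β + (β + s n)*(L n*Ra n)
      - (β + s n)*(L n*Rs n) - (1/2)*(s n/β) - (1/2)*Rs n with hE
  have hE0 : Tendsto E atTop (nhds 0) := by
    have hsaL : Tendsto (fun n => s n * (a n * L n)) atTop (nhds 0) := by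
      have h1 : Tendsto (fun n => δ*(u n * L n * u n) - (u n * Real.log (L n))*γ + η*y*u n
          - δ*u n + γ*(Real.log (L n)/L n) - η*y*(L n)⁻¹) atTop (nhds 0) := by
        have := ((((((huL2.const_mul δ).sub (huW.mul_const γ)).add
          (hu0.const_mul (η*y))).sub (hu0.const_mul δ)).add
          (hWL.const_mul γ)).sub (hinvL.const_mul (η*y)))
        simpa using this
      refine h1.congr' ?_
      filter_upwards [hLpos] with n hn
      have hLne : L n ≠ 0 := ne_of_gt hn
      simp only [hs, ha]
      field_simp
      ring
    have hssL : Tendsto (fun n => s n * (s n * L n)) atTop (nhds 0) := by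
      have h1 : Tendsto (fun n => u n * L n * u n - 2*u n + (L n)⁻¹) atTop (nhds 0) := by
        have := (huL2.sub (hu0.const_mul 2)).add hinvL
        simpa using this
      refine h1.congr' ?_
      filter_upwards [hLpos] with n hn
      have hLne : L n ≠ 0 := ne_of_gt hn
      simp only [hs]
      field_simp
      ring
    have hB : Tendsto (fun n => β + s n) atTop (nhds (β + 0)) :=
      (tendsto_const_nhds : Tendsto (fun _ : ℕ => β) atTop (nhds β)).add hs0
    rw [add_zero] at hB
    have := ((((((hsaL.div_const α).sub (hssL.div_const β)).add (hB.mul hLRa)).sub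
      (hB.mul hLRs)).sub ((hs0.div_const β).const_mul (1/2))).sub (hRs0.const_mul (1/2)))
    simpa [hE] using this
  -- the main eventual identity
  have hmain : ∀ᶠ n : ℕ in atTop,
      L n - χ n + k n * Real.log (χ n) - k n * Real.log (k n) + k n
        - (1/2) * Real.log (2 * k n)
      = (-y - (1/2)*Real.log 2 + (1/2)*Real.log β - Real.log α) + E n := by
    clear_value δ γ η a s φ ψ Ra Rs E
    filter_upwards [hLpos, haev, hsev] with n hn h2 h3
    have hLne : L n ≠ 0 := ne_of_gt hn
    have hA : 0 < α + a n := by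
      have : |a n| ≤ α/2 := by
        rw [abs_div, abs_of_pos hα0, div_le_iff₀ hα0] at h2
        linarith
      cases' abs_le.mp this with h _
      linarith
    have hB : 0 < β + s n := by
      have : |s n| ≤ β/2 := by
        rw [abs_div, abs_of_pos hβ, div_le_iff₀ hβ] at h3
        linarith
      cases' abs_le.mp this with h _
      linarith
    have h1a : (0:ℝ) < 1 + a n / α := by
      rw [show (1:ℝ) + a n / α = (α + a n)/α by field_simp]
      positivity
    have h1s : (0:ℝ) < 1 + s n / β := by
      rw [show (1:ℝ) + s n / β = (β + s n)/β by field_simp]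
      positivity
    have hχeq : χ n = (α + a n) * L n := by
      rw [hχ n]
      simp only [ha]
      field_simp
      ring
    have hkeq : k n = (β + s n) * L n := by
      rw [hk n]
      simp only [hs]
      field_simp
      ring
    have hlogχ : Real.log (χ n) = Real.log α + Real.log (L n) + a n/α + Ra n := by
      rw [hχeq, Real.log_mul (ne_of_gt hA) hLne,
        show α + a n = α * (1 + a n/α) by field_simp,
        Real.log_mul (ne_of_gt hα0) (ne_of_gt h1a)]
      simp only [hRa]
      ring
    have hlogk : Real.log (k n) = Real.log β + Real.log (L n) + s n/β + Rs n := by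
      rw [hkeq, Real.log_mul (ne_of_gt hB) hLne,
        show β + s n = β * (1 + s n/β) by field_simp,
        Real.log_mul (ne_of_gt hβ) (ne_of_gt h1s)]
      simp only [hRs]
      ring
    have hlog2k : Real.log (2 * k n) = Real.log 2 + Real.log β + Real.log (L n) + s n/β + Rs n := by
      rw [Real.log_mul (by norm_num) (by rw [hkeq]; positivity : k n ≠ 0), hlogk]
      ring
    have hla : Real.log α = Real.log β + (α - β - 1)/β := by linarith [hP]
    rw [hlogχ, hlogk, hlog2k, hχeq, hkeq, hla]
    simp only [hE, ha, hs, hδ, hγ, hη]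
    field_simp
    ring
  have hfin : Tendsto (fun n => (-y - (1/2)*Real.log 2 + (1/2)*Real.log β - Real.log α) + E n)
      atTop (nhds ((-y - (1/2)*Real.log 2 + (1/2)*Real.log β - Real.log α) + 0)) :=
    (tendsto_const_nhds : Tendsto (fun _ : ℕ => -y - (1/2)*Real.log 2 + (1/2)*Real.log β
      - Real.log α) atTop (nhds _)).add hE0
  rw [add_zero] at hfin
  exact hfin.congr' (hmain.mono fun n h => h.symm)


lemma aux_log_stirling {k : ℕ} (hk : 1 ≤ k) :
    Real.log (Stirling.stirlingSeq k)
      = Real.log (Nat.factorial k) - (k:ℝ)*(Real.log k - 1) - (1/2)*Real.log (2*k) := by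
  have hk0 : (0:ℝ) < k := by exact_mod_cast hk
  have hfac : (0:ℝ) < (Nat.factorial k : ℝ) := by exact_mod_cast Nat.factorial_pos k
  have hsq : (0:ℝ) < Real.sqrt (2*k) := Real.sqrt_pos.mpr (by positivity)
  have hpow : (0:ℝ) < ((k:ℝ)/Real.exp 1)^k := by positivity
  rw [Stirling.stirlingSeq, Real.log_div hfac.ne' (by positivity),
    Real.log_mul hsq.ne' hpow.ne', Real.log_pow, Real.log_sqrt (by positivity),
    Real.log_div hk0.ne' (Real.exp_ne_zero 1), Real.log_exp]
  ring



lemma aux_S_eq {m : ℕ} (hm : 1 ≤ m) {x : ℝ} (hx : 0 < x) :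
    S m x = x^(m-1)/((Nat.factorial (m-1) : ℕ) : ℝ)
      * ∑ j ∈ Finset.range m, ((m-1).descFactorial j : ℝ)/x^j := by
  rw [S, ← Finset.sum_range_reflect, Finset.mul_sum]
  apply Finset.sum_congr rfl
  intro j hj
  have hjm : j ≤ m - 1 := by
    have := Finset.mem_range.mp hj
    omega
  have hfact : (m - 1 - j).factorial * (m-1).descFactorial j = (m-1).factorial :=
    Nat.factorial_mul_descFactorial hjm
  have hpow : x^(m-1) = x^(m-1-j) * x^j := by
    rw [← pow_add]
    congr 1
    omega
  have h1 : ((m-1-j).factorial : ℝ) ≠ 0 := Nat.cast_ne_zero.mpr (Nat.factorial_ne_zero _)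
  have h2 : ((m-1).factorial : ℝ) ≠ 0 := Nat.cast_ne_zero.mpr (Nat.factorial_ne_zero _)
  have h3 : x^j ≠ 0 := by positivity
  rw [hpow]
  field_simp
  exact_mod_cast hfact.symm

set_option maxHeartbeats 1000000 in
/-- Critical case `m = β ln n + b(n) ln n` with `b(n) = o(1/√(ln n))`: with
`χ(n) = α ln n + (α(α−β−1)/(β(α−β))) b(n) ln n − (α/(2(α−β))) ln ln n + (α/(α−β)) y`,
one has `[1 − S_m(χ) e^{−χ}]^n → exp(−(1/√(2π)) (√β/(α−β)) e^{−y})`; since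
`[1 − S_m(t/n) e^{−t/n}]^n` is the distribution function of the maximum `Δ_{m,n}` of `n`
independent Erlang(m, 1/n) random variables, this is the limiting Gumbel-type law of the
suitably normalized `Δ_{m,n}`. -/
theorem stmt9 (β : ℝ) (hβ : 0 < β)
    (α : ℝ) (hαβ : β < α)
    (hα : α - β * Real.log α = β - β * Real.log β + 1)
    (b : ℕ → ℝ) (m : ℕ → ℕ) (hm : ∀ n, 0 < m n)
    (hmeq : ∀ᶠ n : ℕ in atTop, (m n : ℝ) = β * Real.log n + b n * Real.log n)
    (hb : Tendsto (fun n : ℕ => b n * Real.sqrt (Real.log n)) atTop (nhds 0))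
    (y : ℝ) :
    Tendsto (fun n : ℕ =>
        (1 - S (m n)
            (α * Real.log n + α * (α - β - 1) / (β * (α - β)) * b n * Real.log n
              - α / (2 * (α - β)) * Real.log (Real.log n) + α / (α - β) * y)
          * Real.exp
            (-(α * Real.log n + α * (α - β - 1) / (β * (α - β)) * b n * Real.log n
              - α / (2 * (α - β)) * Real.log (Real.log n) + α / (α - β) * y))) ^ n)
      atTop
      (nhds (Real.exp (-(1 / Real.sqrt (2 * π) * (Real.sqrt β / (α - β)) * Real.exp (-y))))) := by
  have hα0 : 0 < α := hβ.trans hαβ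
  have hab : 0 < α - β := sub_pos.2 hαβ
  have hP : Real.log α - Real.log β = (α - β - 1) / β := by
    rw [eq_div_iff (ne_of_gt hβ)]
    linear_combination -hα
  set L : ℕ → ℝ := fun n => Real.log n with hLdef
  set χf : ℕ → ℝ := fun n => α * Real.log n + α * (α - β - 1) / (β * (α - β)) * b n * Real.log n
    - α / (2 * (α - β)) * Real.log (Real.log n) + α / (α - β) * y with hχdef
  set kf : ℕ → ℝ := fun n => (β + b n) * Real.log n - 1 with hkdef
  have hL : Tendsto L atTop atTop := Real.tendsto_log_atTop.comp tendsto_natCast_atTop_atTop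
  have hbL : Tendsto (fun n : ℕ => b n * Real.sqrt (L n)) atTop (nhds 0) := hb
  have hχ0 : ∀ n : ℕ, χf n = α * L n + α*(α-β-1)/(β*(α-β)) * b n * L n
      - α/(2*(α-β)) * Real.log (L n) + α/(α-β) * y := fun n => rfl
  have hk0 : ∀ n : ℕ, kf n = (β + b n) * L n - 1 := fun n => rfl
  have hG := aux_H hβ hαβ hP hL hbL hχ0 hk0
  -- small facts
  have hLpos : ∀ᶠ n : ℕ in atTop, 0 < L n := hL.eventually_gt_atTop 0
  have hinvL : Tendsto (fun n => (L n)⁻¹) atTop (nhds 0) := tendsto_inv_atTop_zero.comp hL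
  have hsL : Tendsto (fun n => Real.sqrt (L n)) atTop atTop := by
    have h1 : Tendsto (fun x : ℝ => x ^ (1/2 : ℝ)) atTop atTop :=
      tendsto_rpow_atTop (by norm_num)
    refine (h1.comp hL).congr fun n => ?_
    simp [Real.sqrt_eq_rpow]
  have hinvsL : Tendsto (fun n => (Real.sqrt (L n))⁻¹) atTop (nhds 0) :=
    tendsto_inv_atTop_zero.comp hsL
  have hu0 : Tendsto b atTop (nhds 0) := by
    have h1 := hbL.mul hinvsL
    rw [mul_zero] at h1
    refine h1.congr' ?_
    filter_upwards [hLpos] with n hn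
    have : Real.sqrt (L n) ≠ 0 := by positivity
    field_simp
  have hWsL : Tendsto (fun n => Real.log (L n) / Real.sqrt (L n)) atTop (nhds 0) := by
    have h1 : Tendsto (fun x : ℝ => Real.log x / x ^ (1/2:ℝ)) atTop (nhds 0) :=
      (isLittleO_log_rpow_atTop (by norm_num : (0:ℝ) < 1/2)).tendsto_div_nhds_zero
    refine (h1.comp hL).congr fun n => ?_
    simp [Real.sqrt_eq_rpow]
  have hWL : Tendsto (fun n => Real.log (L n) / L n) atTop (nhds 0) := by
    have h1 := hWsL.mul hinvsL
    rw [mul_zero] at h1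
    refine h1.congr' ?_
    filter_upwards [hLpos] with n hn
    have hsne : Real.sqrt (L n) ≠ 0 := by positivity
    have e0 : Real.log (L n) * (Real.sqrt (L n))⁻¹ / Real.sqrt (L n)
        = Real.log (L n) / (Real.sqrt (L n) * Real.sqrt (L n)) := by ring
    show Real.log (L n) / Real.sqrt (L n) * (Real.sqrt (L n))⁻¹ = Real.log (L n) / L n
    rw [div_mul_eq_mul_div, e0, Real.mul_self_sqrt hn.le]
  -- the slowly varying factor of χ
  set Af : ℕ → ℝ := fun n => α + (α*(α-β-1)/(β*(α-β)) * b n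
      - α/(2*(α-β)) * (Real.log (L n)/L n) + α/(α-β)*y*(L n)⁻¹) with hAdef
  have hApar : Tendsto Af atTop (nhds (α + 0)) := by
    apply tendsto_const_nhds.add
    have h1 := ((hu0.const_mul (α*(α-β-1)/(β*(α-β)))).sub
      (hWL.const_mul (α/(2*(α-β))))).add (hinvL.const_mul (α/(α-β)*y))
    simpa using h1
  rw [add_zero] at hApar
  have hχL : ∀ᶠ n : ℕ in atTop, χf n = Af n * L n := by
    filter_upwards [hLpos] with n hn
    have hLne : L n ≠ 0 := ne_of_gt hn
    simp only [hχdef, hAdef]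
    show α * L n + α * (α - β - 1) / (β * (α - β)) * b n * L n
        - α / (2 * (α - β)) * Real.log (L n) + α / (α - β) * y = _
    field_simp
    ring
  have hchiTop : Tendsto χf atTop atTop := by
    refine Tendsto.congr' (hχL.mono fun n h => h.symm) (hApar.pos_mul_atTop hα0 hL)
  have hχpos : ∀ᶠ n : ℕ in atTop, 0 < χf n := hchiTop.eventually_gt_atTop 0
  -- m to infinity
  have hβb : Tendsto (fun n => β + b n) atTop (nhds (β + 0)) := tendsto_const_nhds.add hu0
  rw [add_zero] at hβb
  have hmTop : Tendsto m atTop atTop := by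
    rw [← tendsto_natCast_atTop_iff (R := ℝ)]
    refine Tendsto.congr' ?_ (hβb.pos_mul_atTop hβ hL)
    filter_upwards [hmeq] with n hn
    rw [hn]
    ring
  have hm2 : ∀ᶠ n : ℕ in atTop, 2 ≤ m n := hmTop.eventually_ge_atTop 2
  have hkcast : ∀ᶠ n : ℕ in atTop, ((m n - 1 : ℕ) : ℝ) = kf n := by
    filter_upwards [hmeq, hm2] with n h1 h2
    rw [Nat.cast_sub (by omega), Nat.cast_one, h1]
    show (β * L n + b n * L n) - 1 = (β + b n) * L n - 1
    ring
  have hmk1 : Tendsto (fun n => m n - 1) atTop atTop := (tendsto_sub_atTop_nat 1).comp hmTop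
  have hst : Tendsto (fun n => Real.log (Stirling.stirlingSeq (m n - 1))) atTop
      (nhds (Real.log (Real.sqrt π))) :=
    ((Real.continuousAt_log (ne_of_gt (Real.sqrt_pos.mpr Real.pi_pos))).tendsto.comp
      (Stirling.tendsto_stirlingSeq_sqrt_pi.comp hmk1))
  set C : ℝ := -y - (1/2)*Real.log 2 + (1/2)*Real.log β - Real.log α with hC
  have hGf : Tendsto (fun n => L n - χf n + kf n * Real.log (χf n)
      - Real.log ((Nat.factorial (m n - 1) : ℕ) : ℝ)) atTop
      (nhds (C - Real.log (Real.sqrt π))) := by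
    refine Tendsto.congr' ?_ (hG.sub hst)
    filter_upwards [hkcast, hm2] with n h1 h2
    rw [aux_log_stirling (k := m n - 1) (by omega), h1]
    ring
  -- T = exp(Gf)
  set c0 : ℝ := Real.exp (C - Real.log (Real.sqrt π)) with hc0
  have hT : Tendsto (fun n : ℕ => (n:ℝ) * Real.exp (-χf n) * (χf n)^(m n - 1)
      / ((Nat.factorial (m n - 1) : ℕ) : ℝ)) atTop (nhds c0) := by
    refine Tendsto.congr' ?_ (Real.continuous_exp.continuousAt.tendsto.comp hGf)
    filter_upwards [hχpos, hkcast, eventually_ge_atTop 1] with n h1 h2 h3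
    have hn0 : (0:ℝ) < (n:ℝ) := by exact_mod_cast h3
    have hf0 : (0:ℝ) < ((Nat.factorial (m n - 1) : ℕ) : ℝ) := by
      exact_mod_cast Nat.factorial_pos _
    have hLL : L n = Real.log ((n:ℕ):ℝ) := rfl
    simp only [Function.comp_apply]
    rw [show L n - χf n + kf n * Real.log (χf n) - Real.log ((Nat.factorial (m n - 1) : ℕ) : ℝ)
        = Real.log ((n:ℕ):ℝ) + kf n * Real.log (χf n) - χf n
          - Real.log ((Nat.factorial (m n - 1) : ℕ) : ℝ)
        by rw [← hLL]; ring]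
    rw [Real.exp_sub, Real.exp_sub, Real.exp_add, ← h2, Real.exp_nat_mul,
      Real.exp_log h1, Real.exp_log hf0, Real.exp_log hn0, Real.exp_neg]
    field_simp
  -- ratio of m to χ
  have hratio : Tendsto (fun n => (m n : ℝ)/χf n) atTop (nhds (β/α)) := by
    have h1 : Tendsto (fun n => (β + b n)/(Af n)) atTop (nhds (β/α)) :=
      hβb.div hApar (ne_of_gt hα0)
    have hAfpos : ∀ᶠ n : ℕ in atTop, 0 < Af n := hApar.eventually_const_lt hα0
    refine Tendsto.congr' ?_ h1
    filter_upwards [hmeq, hχL, hLpos, hAfpos] with n h1 h2 h3 h4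
    have hLL : Real.log ((n:ℕ):ℝ) = L n := rfl
    rw [h1, h2, hLL]
    field_simp
  have hR := aux_R_tendsto (le_of_lt (div_pos hβ hα0))
    (by rw [div_lt_one hα0]; exact hαβ) hmTop hchiTop hratio
  -- n * p n
  have hnp : Tendsto (fun n : ℕ => (n:ℝ) * (S (m n) (χf n) * Real.exp (-(χf n)))) atTop
      (nhds (c0 * (1 - β/α)⁻¹)) := by
    refine Tendsto.congr' ?_ (hT.mul hR)
    filter_upwards [hχpos, hm2] with n h1 h2
    rw [aux_S_eq (by omega) h1]
    ring
  have hppos : ∀ᶠ n : ℕ in atTop, 0 < S (m n) (χf n) * Real.exp (-(χf n)) := by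
    filter_upwards [hχpos] with n h1
    refine mul_pos ?_ (Real.exp_pos _)
    exact Finset.sum_pos (fun l _ => by positivity) ⟨0, Finset.mem_range.mpr (hm n)⟩
  -- the constant
  have hsq2 : (0:ℝ) < Real.sqrt 2 := Real.sqrt_pos.mpr two_pos
  have hsqpi : (0:ℝ) < Real.sqrt π := Real.sqrt_pos.mpr Real.pi_pos
  have hsqb : (0:ℝ) < Real.sqrt β := Real.sqrt_pos.mpr hβ
  have hc : c0 * (1 - β/α)⁻¹ = 1 / Real.sqrt (2 * π) * (Real.sqrt β / (α - β)) * Real.exp (-y) := by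
    have e1 : Real.exp C = Real.exp (-y) * Real.sqrt β / (Real.sqrt 2 * α) := by
      rw [hC, show -y - (1/2)*Real.log 2 + (1/2)*Real.log β - Real.log α
          = (-y + (1/2)*Real.log β) - ((1/2)*Real.log 2 + Real.log α) by ring]
      rw [Real.exp_sub, Real.exp_add, Real.exp_add]
      rw [show (1/2)*Real.log β = Real.log (Real.sqrt β) by rw [Real.log_sqrt hβ.le]; ring]
      rw [show (1/2)*Real.log 2 = Real.log (Real.sqrt 2) by rw [Real.log_sqrt (by norm_num)]; ring]
      rw [Real.exp_log hsqb, Real.exp_log hsq2, Real.exp_log hα0]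
    rw [hc0, Real.exp_sub, Real.exp_log hsqpi, e1]
    rw [show (1:ℝ) - β/α = (α-β)/α by field_simp, inv_div]
    rw [Real.sqrt_mul (by norm_num : (0:ℝ) ≤ 2) π]
    field_simp
  rw [← hc]
  exact aux_one_sub_pow hppos hnp
end

section
/- For β > 0 let α(β) denote the unique solution in (β, ∞) of the equation α − β·ln α = β − β·ln β + 1. Then (α(β) − β)/√β → √2 as β → ∞; consequently, the constant C(β) := (1/2)·ln(2π·(α(β)−β)²/β) satisfies C(β) → ln(2√π) as β → ∞. -/
open Filter Real

lemma L1 (x : ℝ) (hx : 0 ≤ x) : x - x^2/2 ≤ Real.log (1+x) := by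
  set g : ℝ → ℝ := fun x => Real.log (1+x) - x + x^2/2 with hg
  have hder : ∀ y : ℝ, 0 < y → HasDerivAt g (1/(1+y) - 1 + y) y := by
    intro y hy
    have h1 : HasDerivAt (fun x : ℝ => 1 + x) 1 y := by
      simpa using (hasDerivAt_id y).const_add (1:ℝ)
    have h2 : HasDerivAt (fun x : ℝ => Real.log (1+x)) (1/(1+y)) y := by
      simpa using h1.log (by positivity)
    have h3 := ((h2.sub (hasDerivAt_id y)).add ((hasDerivAt_pow 2 y).div_const 2))
    rw [show (1/(1+y) - 1 + y : ℝ) = 1/(1+y) - 1 + ↑2 * y^(2-1)/2 by norm_num]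
    exact h3
  have mono : MonotoneOn g (Set.Ici (0:ℝ)) := by
    apply monotoneOn_of_deriv_nonneg (convex_Ici 0)
    · apply ContinuousOn.add
      apply ContinuousOn.sub
      · exact (Real.continuousOn_log.comp (by fun_prop)
          (fun x hx => by simp at hx ⊢; positivity))
      · fun_prop
      · fun_prop
    · intro x hx
      rw [interior_Ici] at hx
      exact ((hder x hx).differentiableAt).differentiableWithinAt
    · intro x hx
      rw [interior_Ici] at hx
      have hx' : (0:ℝ) < x := hx
      have h1x : (0:ℝ) < 1 + x := by linarith
      rw [(hder x hx).deriv]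
      have h : 1/(1+x) - 1 + x = x^2/(1+x) := by field_simp; ring
      rw [h]; positivity
  have h0 : g 0 ≤ g x := mono (by simp) (by simpa using hx) hx
  simp [hg] at h0
  linarith

lemma L4 (x : ℝ) (hx : 0 ≤ x) : x^2/(2*(1+x)) ≤ x - Real.log (1+x) := by
  set g : ℝ → ℝ := fun x => x - Real.log (1+x) - x^2/(2*(1+x)) with hg
  have hder : ∀ y : ℝ, 0 < y →
      HasDerivAt g (1 - 1/(1+y) - (2*y*(2*(1+y)) - y^2*2)/(2*(1+y))^2) y := by
    intro y hy
    have h1 : HasDerivAt (fun x : ℝ => 1 + x) 1 y := by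
      simpa using (hasDerivAt_id y).const_add (1:ℝ)
    have h2 : HasDerivAt (fun x : ℝ => Real.log (1+x)) (1/(1+y)) y := by
      simpa using h1.log (by positivity)
    have hq : HasDerivAt (fun x : ℝ => x^2) (2*y) y := by
      simpa using hasDerivAt_pow 2 y
    have hr : HasDerivAt (fun x : ℝ => 2*(1+x)) 2 y := by
      simpa using h1.const_mul 2
    exact ((hasDerivAt_id y).sub h2).sub (hq.div hr (by positivity))
  have mono : MonotoneOn g (Set.Ici (0:ℝ)) := by
    apply monotoneOn_of_deriv_nonneg (convex_Ici 0)
    · apply ContinuousOn.sub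
      apply ContinuousOn.sub
      · fun_prop
      · exact (Real.continuousOn_log.comp (by fun_prop)
          (fun x hx => by simp at hx ⊢; positivity))
      · apply ContinuousOn.div
        · fun_prop
        · fun_prop
        · intro x hx; simp at hx; positivity
    · intro x hx
      rw [interior_Ici] at hx
      exact ((hder x hx).differentiableAt).differentiableWithinAt
    · intro x hx
      rw [interior_Ici] at hx
      have hx' : (0:ℝ) < x := hx
      have h1x : (0:ℝ) < 1 + x := by linarith
      rw [(hder x hx).deriv]
      have h : 1 - 1/(1+x) - (2*x*(2*(1+x)) - x^2*2)/(2*(1+x))^2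
          = x^2/(2*(1+x)^2) := by field_simp; ring
      rw [h]; positivity
  have h0 : g 0 ≤ g x := mono (by simp) (by simpa using hx) hx
  simp [hg] at h0
  linarith

set_option maxHeartbeats 1000000 in
/-- If for each `β > 0`, `α(β)` is the unique solution in `(β, ∞)` of
`α − β ln α = β − β ln β + 1`, then `(α(β) − β)/√β → √2` as `β → ∞`, and consequently
`C(β) = (1/2) ln(2π (α(β) − β)²/β) → ln(2√π)` as `β → ∞`. -/
theorem stmt19 (α : ℝ → ℝ)
    (hα : ∀ β : ℝ, 0 < β →
      β < α β ∧ α β - β * Real.log (α β) = β - β * Real.log β + 1) :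
    Tendsto (fun β : ℝ => (α β - β) / Real.sqrt β) atTop (nhds (Real.sqrt 2)) ∧
      Tendsto (fun β : ℝ => 1 / 2 * Real.log (2 * π * (α β - β) ^ 2 / β)) atTop
        (nhds (Real.log (2 * Real.sqrt π))) := by
  -- the key facts for β ≥ 4
  have main : ∀ β : ℝ, 4 ≤ β → Real.sqrt 2 ≤ (α β - β) / Real.sqrt β ∧
      (α β - β) / Real.sqrt β ≤ Real.sqrt (2 + 4 / Real.sqrt β) := by
    intro β hβ4
    have hβ : (0:ℝ) < β := by linarith
    obtain ⟨hlt, heq⟩ := hα β hβ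
    set u : ℝ := (α β - β) / β with hu_def
    have hu : 0 < u := div_pos (by linarith) hβ
    have hsβ : (0:ℝ) < Real.sqrt β := Real.sqrt_pos.mpr hβ
    have hβu : β * u = α β - β := by rw [hu_def]; field_simp
    have h1u : (1:ℝ) + u = α β / β := by rw [hu_def]; field_simp; ring
    have hlog : Real.log (1 + u) = Real.log (α β) - Real.log β := by
      rw [h1u, Real.log_div (by linarith) (ne_of_gt hβ)]
    have key : β * (u - Real.log (1 + u)) = 1 := by
      rw [hlog]; nlinarith [heq, hβu]
    -- t = u * √β
    have ht_eq : (α β - β) / Real.sqrt β = u * Real.sqrt β := by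
      rw [← hβu]
      have hss : Real.sqrt β * Real.sqrt β = β := Real.mul_self_sqrt hβ.le
      rw [div_eq_iff (ne_of_gt hsβ), mul_assoc, hss, mul_comm]
    set t : ℝ := u * Real.sqrt β with ht_def
    have ht0 : 0 < t := mul_pos hu hsβ
    have ht2 : t^2 = β * u^2 := by
      have : Real.sqrt β ^ 2 = β := Real.sq_sqrt hβ.le
      rw [ht_def]; nlinarith [this]
    -- lower bound : 2 ≤ t^2
    have hL1' := L1 u hu.le
    have hlow2 : 2 ≤ t^2 := by
      rw [ht2]; nlinarith [key, hL1', hβ]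
    have hlow : Real.sqrt 2 ≤ t := by
      calc Real.sqrt 2 ≤ Real.sqrt (t^2) := Real.sqrt_le_sqrt hlow2
        _ = t := Real.sqrt_sq ht0.le
    -- upper bound
    have hL4' := L4 u hu.le
    have hq : β * u^2 ≤ 2 * (1 + u) := by
      have h2u : (0:ℝ) < 2*(1+u) := by linarith
      rw [div_le_iff₀ h2u] at hL4'
      nlinarith [key, hL4', hβ]
    have hu1 : u ≤ 1 := by
      nlinarith [hq, mul_nonneg (by linarith : (0:ℝ) ≤ β - 4) (sq_nonneg u), sq_nonneg (u-1)]
    have ht4 : t^2 ≤ 4 := by rw [ht2]; nlinarith [hq, hu1]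
    have ht2' : t ≤ 2 := by nlinarith
    have huu : 2 * u ≤ 4 / Real.sqrt β := by
      rw [le_div_iff₀ hsβ]
      have h2t : 2 * u * Real.sqrt β = 2 * t := by rw [ht_def]; ring
      rw [h2t]; linarith
    have hhigh2 : t^2 ≤ 2 + 4 / Real.sqrt β := by
      rw [ht2]; linarith [hq, huu]
    have hhigh : t ≤ Real.sqrt (2 + 4 / Real.sqrt β) := by
      calc t = Real.sqrt (t^2) := (Real.sqrt_sq ht0.le).symm
        _ ≤ _ := Real.sqrt_le_sqrt hhigh2
    rw [ht_eq]
    exact ⟨hlow, hhigh⟩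
  have hupperlim : Tendsto (fun β : ℝ => Real.sqrt (2 + 4 / Real.sqrt β)) atTop
      (nhds (Real.sqrt 2)) := by
    have sqrtTop : Tendsto Real.sqrt atTop atTop := by
      apply tendsto_atTop_atTop.mpr
      intro b
      refine ⟨max 0 (b^2), fun a ha => ?_⟩
      rcases le_or_gt b 0 with hb | hb
      · exact hb.trans (Real.sqrt_nonneg a)
      · have h1 : b^2 ≤ a := le_trans (le_max_right _ _) ha
        have h2 := Real.sqrt_le_sqrt h1
        rwa [Real.sqrt_sq hb.le] at h2
    have h0 : Tendsto (fun β : ℝ => 4 / Real.sqrt β) atTop (nhds 0) :=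
      tendsto_const_nhds.div_atTop sqrtTop
    have h2 : Tendsto (fun β : ℝ => 2 + 4 / Real.sqrt β) atTop (nhds 2) := by
      simpa using tendsto_const_nhds.add h0
    exact (Real.continuous_sqrt.tendsto 2).comp h2
  have key1 : Tendsto (fun β : ℝ => (α β - β) / Real.sqrt β) atTop (nhds (Real.sqrt 2)) := by
    apply tendsto_of_tendsto_of_tendsto_of_le_of_le' tendsto_const_nhds hupperlim
    · filter_upwards [eventually_ge_atTop (4:ℝ)] with β hβ using (main β hβ).1
    · filter_upwards [eventually_ge_atTop (4:ℝ)] with β hβ using (main β hβ).2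
  refine ⟨key1, ?_⟩
  -- second limit
  have hπ : (0:ℝ) < π := Real.pi_pos
  have h4π : Real.log (2 * Real.sqrt π) = 1/2 * Real.log (4 * π) := by
    have : (2:ℝ) * Real.sqrt π = Real.sqrt (4 * π) := by
      rw [show (4:ℝ) * π = 2^2 * π by ring, Real.sqrt_mul (by positivity),
        Real.sqrt_sq (by norm_num : (0:ℝ) ≤ 2)]
    rw [this, Real.log_sqrt (by positivity)]
    ring
  rw [h4π]
  have hcomp : Tendsto (fun β : ℝ => 2 * π * ((α β - β) / Real.sqrt β)^2) atTop
      (nhds (4 * π)) := by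
    have := (key1.pow 2).const_mul (2 * π)
    have h2 : 2 * π * Real.sqrt 2 ^ 2 = 4 * π := by
      rw [Real.sq_sqrt (by norm_num : (0:ℝ) ≤ 2)]; ring
    rwa [h2] at this
  have hlog : Tendsto (fun β : ℝ => Real.log (2 * π * ((α β - β) / Real.sqrt β)^2)) atTop
      (nhds (Real.log (4 * π))) :=
    (Real.continuousAt_log (by positivity)).tendsto.comp hcomp
  have final := hlog.const_mul (1/2 : ℝ)
  apply Tendsto.congr' _ (by simpa [mul_comm] using final)
  filter_upwards [eventually_gt_atTop (0:ℝ)] with β hβ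
  have hsβ : Real.sqrt β ^ 2 = β := Real.sq_sqrt hβ.le
  rw [div_pow, hsβ]
  ring_nf
end
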